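/- arXiv:1304.5007 — 6 statements merged into one kernel-verified Lean document; each statement's English description precedes it below -/
import Mathlib

section
/- There is a universal constant C such that for every q ≥ 2 and every 0 < ε ≤ 1, the set 𝒮_q of q-outcome rank-one single-qubit POVMs admits an ε-net with respect to the metric t of cardinality at most (C/ε)^{3q}; equivalently N(𝒮_q, t, ε) ≤ (C/ε)^{3q}. -/
open scoped BigOperators ComplexOrder

noncomputable section

namespace IQ

/-- |α₀₀⟩ = |0⟩ -/
def ket00 : Fin 2 → ℂ := ![1, 0]
/-- |α₁₁⟩ = |1⟩ -/
def ket11 : Fin 2 → ℂ := ![0, 1]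
/-- |α₀₁⟩ = |+⟩ -/
def ketP : Fin 2 → ℂ := ![((Real.sqrt 2 : ℝ) : ℂ)⁻¹, ((Real.sqrt 2 : ℝ) : ℂ)⁻¹]
/-- |α₁₀⟩ = |−⟩ -/
def ketM : Fin 2 → ℂ := ![((Real.sqrt 2 : ℝ) : ℂ)⁻¹, -((Real.sqrt 2 : ℝ) : ℂ)⁻¹]

/-- the single-qubit states |α_{bc}⟩ -/
def alpha (b c : Fin 2) : Fin 2 → ℂ :=
  if b = c then (if b = 0 then ket00 else ket11)
  else (if b = 0 then ketP else ketM)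

/-- ⟨ψ| M |ψ⟩ (real part) -/
def expVal (M : Matrix (Fin 2) (Fin 2) ℂ) (ψ : Fin 2 → ℂ) : ℝ :=
  (dotProduct (star ψ) (M.mulVec ψ)).re

/-- A 1-pass LOCC strategy with `q`-outcome measurements on `n` isolated qubits:
an adaptive decision tree which, at step `a`, given the previous outcomes,
chooses a not-yet-measured qubit and a single-qubit POVM with `q` outcomes. -/
structure Strategy (n q : ℕ) where
  qubit : (a : Fin n) → (Fin a.val → Fin q) → Fin n
  povm : (a : Fin n) → (Fin a.val → Fin q) → Fin q → Matrix (Fin 2) (Fin 2) ℂ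
  povm_psd : ∀ a z ζ, (povm a z ζ).PosSemidef
  povm_sum : ∀ a z, ∑ ζ, povm a z ζ = 1
  onePass : ∀ z : Fin n → Fin q,
    Function.Injective (fun a : Fin n => qubit a (fun i => z (Fin.castLE a.isLt.le i)))

/-- the prefix z_{<a} of an outcome string -/
def pre {m q : ℕ} (z : Fin m → Fin q) (a : Fin m) : Fin a.val → Fin q :=
  fun i => z (Fin.castLE a.isLt.le i)

/-- Pr[Z = z] when the strategy `M` is applied to the product state `⊗ᵢ ψᵢ`. -/
def outcomeProb {n q : ℕ} (M : Strategy n q) (ψ : Fin n → Fin 2 → ℂ) (z : Fin n → Fin q) : ℝ :=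
  ∏ a : Fin n, expVal (M.povm a (pre z a) (z a)) (ψ (M.qubit a (pre z a)))

/-- probability of the outcomes of the first `m` steps of a strategy -/
def prefixProb {n q : ℕ} (M : Strategy n q) (ψ : Fin n → Fin 2 → ℂ) {m : ℕ} (hm : m ≤ n)
    (z : Fin m → Fin q) : ℝ :=
  ∏ a : Fin m, expVal (M.povm (Fin.castLE hm a) (pre z a) (z a))
    (ψ (M.qubit (Fin.castLE hm a) (pre z a)))

/-- the product state |E(u)⟩, as the list of its single-qubit factors -/
def stateOf {n nt : ℕ} (E : (Fin nt → Fin 2) → Fin n → Fin 2 × Fin 2) (u : Fin nt → Fin 2) :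
    Fin n → Fin 2 → ℂ :=
  fun a => alpha (E u a).1 (E u a).2

/-- Shannon entropy (in bits) of a finitely supported distribution -/
def shannon {σ : Type*} [Fintype σ] (p : σ → ℝ) : ℝ :=
  ∑ x, -(p x * Real.logb 2 (p x))

/-- mutual information I(Z;U) = H(Z) + H(U) − H(Z,U) of a joint distribution
`P z u = Pr[Z = z, U = u]` -/
def mutualInfo {σ τ : Type*} [Fintype σ] [Fintype τ] (P : σ → τ → ℝ) : ℝ :=
  shannon (fun z => ∑ u, P z u) + shannon (fun u => ∑ z, P z u)
    - shannon (fun p : σ × τ => P p.1 p.2)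

/-- conditional entropy H(U|Z) = H(Z,U) − H(Z) of a joint distribution -/
def condEnt {σ τ : Type*} [Fintype σ] [Fintype τ] (P : σ → τ → ℝ) : ℝ :=
  shannon (fun p : σ × τ => P p.1 p.2) - shannon (fun z => ∑ u, P z u)

/-- collision (Rényi 2-) entropy of the normalization of a nonnegative weight function -/
def condH2 {σ : Type*} [Fintype σ] (w : σ → ℝ) : ℝ :=
  -Real.logb 2 (∑ u, (w u / ∑ v, w v)^2)

/-- η(x) = −x·lg x -/
def eta (x : ℝ) : ℝ := -(x * Real.logb 2 x)

/-- binary entropy function -/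
def binEnt (p : ℝ) : ℝ := -(p * Real.logb 2 p) - ((1-p) * Real.logb 2 (1-p))

/-- the joint distribution of (Z,U) in the state discrimination game:
U uniform on {0,1}^ñ, Z the output of strategy `M` on |E(U)⟩ -/
def gameDist {n nt q : ℕ} (M : Strategy n q)
    (E : (Fin nt → Fin 2) → Fin n → Fin 2 × Fin 2) :
    (Fin n → Fin q) → (Fin nt → Fin 2) → ℝ :=
  fun z u => ((2:ℝ)^nt)⁻¹ * outcomeProb M (stateOf E u) z

/-- probability of an event under the uniform distribution on a finite type -/
def prFin {α : Type*} [Fintype α] (P : α → Prop) : ℝ :=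
  haveI := Classical.decPred P
  ((Finset.univ.filter P).card : ℝ) / (Fintype.card α : ℝ)

/-- expectation of a function under the uniform distribution on a finite type -/
def expFin {α : Type*} [Fintype α] (f : α → ℝ) : ℝ :=
  (∑ a, f a) / (Fintype.card α : ℝ)

/-- operator norm of a matrix (largest singular value) -/
def opNormM {ι : Type*} [Fintype ι] [DecidableEq ι] (M : Matrix ι ι ℂ) : ℝ :=
  ‖Matrix.toEuclideanCLM (𝕜 := ℂ) M‖

/-- Frobenius norm of a matrix -/
def frobNorm {ι κ : Type*} [Fintype ι] [Fintype κ] (M : Matrix ι κ ℂ) : ℝ :=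
  Real.sqrt (∑ i, ∑ j, ‖M i j‖^2)

/-- the set 𝒮_q of q-outcome single-qubit POVMs all of whose elements have rank one -/
def Sq (q : ℕ) : Set (Fin q → Matrix (Fin 2) (Fin 2) ℂ) :=
  {M | (∀ i, (M i).PosSemidef ∧ (M i).rank = 1) ∧ ∑ i, M i = 1}

/-- the metric t(M, M̃) = maxᵢ ‖Mᵢ − M̃ᵢ‖ on 𝒮_q -/
def tDist {q : ℕ} (M M' : Fin q → Matrix (Fin 2) (Fin 2) ℂ) : ℝ :=
  ⨆ i, opNormM (M i - M' i)

/-- `L` is an ε-net for 𝒮_q with respect to the metric `tDist` -/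
def IsNet {q : ℕ} (L : Finset (Fin q → Matrix (Fin 2) (Fin 2) ℂ)) (ε : ℝ) : Prop :=
  ∀ M ∈ Sq q, ∃ M' ∈ L, tDist M M' ≤ ε

/-- the n-qubit product state |E(s,t)⟩ of the one-time memory, as the list of its factors -/
def otmState {n k : ℕ} (C D : (Fin k → Fin 2) → Fin n → Fin 2)
    (s t : Fin k → Fin 2) : Fin n → Fin 2 → ℂ :=
  fun a => alpha (C s a) (D t a)

/-- the joint distribution of (Z,(S,T)): S,T uniform on {0,1}^k,
Z the output of strategy `M` on |E(S,T)⟩ -/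
def otmGame {n k q : ℕ} (M : Strategy n q) (C D : (Fin k → Fin 2) → Fin n → Fin 2) :
    (Fin n → Fin q) → ((Fin k → Fin 2) × (Fin k → Fin 2)) → ℝ :=
  fun z st => ((4:ℝ)^k)⁻¹ * outcomeProb M (otmState C D st.1 st.2) z




/-! ### Auxiliary lemmas for the ε-net construction -/

/-- parameterized rank-≤1 PSD matrix `(x, y e^{iθ}) (x, y e^{iθ})ᴴ` -/
noncomputable def mpAux (x y θ : ℝ) : Matrix (Fin 2) (Fin 2) ℂ :=
  Matrix.of ![![((x^2 : ℝ) : ℂ), ((x*y : ℝ) : ℂ) * Complex.exp (((-θ : ℝ) : ℂ) * Complex.I)],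
     ![((x*y : ℝ) : ℂ) * Complex.exp ((θ : ℂ) * Complex.I), ((y^2 : ℝ) : ℂ)]]

lemma psd_diag_aux {n : Type*} [Fintype n] [DecidableEq n] {M : Matrix n n ℂ}
    (h : M.PosSemidef) (j : n) : 0 ≤ M j j := by
  exact h.diag_nonneg

lemma det_eq_zero_aux {M : Matrix (Fin 2) (Fin 2) ℂ} (h : M.rank = 1) : M.det = 0 := by
  by_contra hd
  have htt := Matrix.rank_of_isUnit M (M.isUnit_iff_isUnit_det.mpr (isUnit_iff_ne_zero.mpr hd))
  rw [h] at htt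
  simp at htt

lemma exists_mp_aux {M : Matrix (Fin 2) (Fin 2) ℂ} (hpsd : M.PosSemidef)
    (hdet : M.det = 0) (h00 : (M 0 0).re ≤ 1) (h11 : (M 1 1).re ≤ 1) :
    ∃ x y θ : ℝ, 0 ≤ x ∧ x ≤ 1 ∧ 0 ≤ y ∧ y ≤ 1 ∧ -Real.pi ≤ θ ∧ θ ≤ Real.pi ∧
      M = mpAux x y θ := by
  obtain ⟨ha, ha'⟩ := Complex.nonneg_iff.mp (psd_diag_aux hpsd 0)
  obtain ⟨hd, hd'⟩ := Complex.nonneg_iff.mp (psd_diag_aux hpsd 1)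
  set a := (M 0 0).re with haa
  set d := (M 1 1).re with hdd
  have hM00 : M 0 0 = (a : ℂ) := Complex.ext rfl ha'.symm
  have hM11 : M 1 1 = (d : ℂ) := Complex.ext rfl hd'.symm
  have hherm : M 0 1 = star (M 1 0) := (hpsd.1.apply 0 1).symm
  have hns : Complex.normSq (M 1 0) = a * d := by
    have h1 : M 0 1 * M 1 0 = (↑(a*d) : ℂ) := by
      have hde := Matrix.det_fin_two M
      rw [hdet] at hde
      rw [hM00, hM11] at hde
      push_cast
      linear_combination hde
    rw [hherm] at h1
    have h2 : ((Complex.normSq (M 1 0) : ℝ) : ℂ) = ((a*d : ℝ) : ℂ) := by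
      rw [Complex.normSq_eq_conj_mul_self]; exact h1
    exact_mod_cast h2
  set θ := (M 1 0).arg with hθdef
  refine ⟨Real.sqrt a, Real.sqrt d, θ, Real.sqrt_nonneg _, ?_, Real.sqrt_nonneg _, ?_,
    le_of_lt (Complex.neg_pi_lt_arg _), Complex.arg_le_pi _, ?_⟩
  · exact Real.sqrt_le_one.mpr h00
  · exact Real.sqrt_le_one.mpr h11
  · have habs : (‖M 1 0‖ : ℝ) = Real.sqrt a * Real.sqrt d := by
      rw [Complex.norm_def, hns, Real.sqrt_mul ha]
    have h10 : M 1 0 = ((Real.sqrt a * Real.sqrt d : ℝ) : ℂ) *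
        Complex.exp ((θ : ℂ) * Complex.I) := by
      rw [← habs, Complex.norm_mul_exp_arg_mul_I]
    have h01 : M 0 1 = ((Real.sqrt a * Real.sqrt d : ℝ) : ℂ) *
        Complex.exp (((-θ : ℝ) : ℂ) * Complex.I) := by
      rw [hherm, h10, star_mul', Complex.star_def, Complex.conj_ofReal, ← Complex.exp_conj]
      congr 2
      rw [_root_.map_mul, Complex.conj_ofReal, Complex.conj_I]
      push_cast
      ring
    ext i j
    fin_cases i <;> fin_cases j
    · simpa [mpAux, Real.sq_sqrt ha] using hM00
    · simpa [mpAux] using h01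
    · simpa [mpAux] using h10
    · simpa [mpAux, Real.sq_sqrt hd] using hM11

lemma exp_close_aux {θ θ' : ℝ} (h : |θ - θ'| ≤ 1) :
    ‖Complex.exp ((θ:ℂ)*Complex.I) - Complex.exp ((θ':ℂ)*Complex.I)‖
      ≤ 2 * |θ - θ'| := by
  have h1 : Complex.exp ((θ:ℂ)*Complex.I) - Complex.exp ((θ':ℂ)*Complex.I)
      = Complex.exp ((θ':ℂ)*Complex.I) * (Complex.exp (((θ-θ':ℝ):ℂ)*Complex.I) - 1) := by
    rw [mul_sub, mul_one, ← Complex.exp_add]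
    push_cast
    ring_nf
  rw [h1, norm_mul, Complex.norm_exp_ofReal_mul_I, one_mul]
  have h2 : ‖((θ-θ':ℝ):ℂ)*Complex.I‖ = |θ - θ'| := by
    rw [norm_mul, Complex.norm_I, Complex.norm_real, Real.norm_eq_abs, mul_one]
  have h3 := Complex.norm_exp_sub_one_le (x := ((θ-θ':ℝ):ℂ)*Complex.I) (by rw [h2]; exact h)
  rwa [h2] at h3

lemma mp_close_aux {x y θ x' y' θ' δ : ℝ} (hδ : δ ≤ 1)
    (hx0 : 0 ≤ x) (hx1 : x ≤ 1) (hy0 : 0 ≤ y) (hy1 : y ≤ 1)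
    (hx0' : 0 ≤ x') (hx1' : x' ≤ 1) (hy0' : 0 ≤ y') (hy1' : y' ≤ 1)
    (h1 : |x - x'| ≤ δ) (h2 : |y - y'| ≤ δ) (h3 : |θ - θ'| ≤ δ) :
    ∀ i j, ‖(mpAux x y θ - mpAux x' y' θ') i j‖ ≤ 4 * δ := by
  have hδ0 : 0 ≤ δ := le_trans (abs_nonneg _) h1
  have hxy : |x*y - x'*y'| ≤ 2*δ := by
    obtain ⟨a1, a2⟩ := abs_le.mp h1
    obtain ⟨b1, b2⟩ := abs_le.mp h2
    rw [abs_le]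
    constructor <;> nlinarith
  have key : ∀ ψ ψ' : ℝ, |ψ - ψ'| ≤ δ →
      ‖((x*y:ℝ):ℂ) * Complex.exp ((ψ:ℂ)*Complex.I)
        - ((x'*y':ℝ):ℂ) * Complex.exp ((ψ':ℂ)*Complex.I)‖ ≤ 4 * δ := by
    intro ψ ψ' hψ
    have split : ((x*y:ℝ):ℂ) * Complex.exp ((ψ:ℂ)*Complex.I)
        - ((x'*y':ℝ):ℂ) * Complex.exp ((ψ':ℂ)*Complex.I)
        = (((x*y - x'*y':ℝ)):ℂ) * Complex.exp ((ψ:ℂ)*Complex.I)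
          + ((x'*y':ℝ):ℂ) * (Complex.exp ((ψ:ℂ)*Complex.I) - Complex.exp ((ψ':ℂ)*Complex.I)) := by
      push_cast; ring
    rw [split]
    refine le_trans (norm_add_le _ _) ?_
    rw [norm_mul, norm_mul, Complex.norm_exp_ofReal_mul_I, mul_one,
      Complex.norm_real, Complex.norm_real, Real.norm_eq_abs, Real.norm_eq_abs]
    have e1 : ‖Complex.exp ((ψ:ℂ)*Complex.I) - Complex.exp ((ψ':ℂ)*Complex.I)‖
        ≤ 2 * |ψ - ψ'| := exp_close_aux (le_trans hψ hδ)
    have e2 : |x'*y'| ≤ 1 := by rw [_root_.abs_of_nonneg (by positivity)]; nlinarith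
    have e3 : ‖Complex.exp ((ψ:ℂ)*Complex.I) - Complex.exp ((ψ':ℂ)*Complex.I)‖
        ≤ 2*δ := by
      refine le_trans e1 ?_; linarith
    nlinarith [abs_nonneg (x'*y'), norm_nonneg
      (Complex.exp ((ψ:ℂ)*Complex.I) - Complex.exp ((ψ':ℂ)*Complex.I))]
  simp only [Fin.forall_fin_two]
  refine ⟨⟨?_, ?_⟩, ?_, ?_⟩
  · have he : (mpAux x y θ - mpAux x' y' θ') 0 0 = (((x^2 - x'^2 : ℝ)):ℂ) := by
      simp [mpAux, Matrix.sub_apply]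
    rw [he, Complex.norm_real, Real.norm_eq_abs]
    obtain ⟨a1, a2⟩ := abs_le.mp h1
    rw [abs_le]; constructor <;> nlinarith
  · have he : (mpAux x y θ - mpAux x' y' θ') 0 1
        = ((x*y:ℝ):ℂ) * Complex.exp (((-θ:ℝ):ℂ)*Complex.I)
          - ((x'*y':ℝ):ℂ) * Complex.exp (((-θ':ℝ):ℂ)*Complex.I) := by
      simp [mpAux, Matrix.sub_apply]
    rw [he]
    exact key (-θ) (-θ') (by rw [show -θ - -θ' = -(θ - θ') by ring, abs_neg]; exact h3)
  · have he : (mpAux x y θ - mpAux x' y' θ') 1 0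
        = ((x*y:ℝ):ℂ) * Complex.exp ((θ:ℂ)*Complex.I)
          - ((x'*y':ℝ):ℂ) * Complex.exp ((θ':ℂ)*Complex.I) := by
      simp [mpAux, Matrix.sub_apply]
    rw [he]
    exact key θ θ' h3
  · have he : (mpAux x y θ - mpAux x' y' θ') 1 1 = (((y^2 - y'^2 : ℝ)):ℂ) := by
      simp [mpAux, Matrix.sub_apply]
    rw [he, Complex.norm_real, Real.norm_eq_abs]
    obtain ⟨a1, a2⟩ := abs_le.mp h2
    rw [abs_le]; constructor <;> nlinarith

lemma opNormM_le_of_entry_aux {M : Matrix (Fin 2) (Fin 2) ℂ} {e : ℝ}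
    (h : ∀ i j, ‖M i j‖ ≤ e) : opNormM M ≤ 4 * e := by
  have he : 0 ≤ e := le_trans (norm_nonneg _) (h 0 0)
  rw [opNormM]
  refine ContinuousLinearMap.opNorm_le_bound _ (by positivity) fun v => ?_
  have hv : ∀ i, ‖v i‖ ≤ ‖v‖ := by
    intro i
    rw [EuclideanSpace.norm_eq]
    rw [show ‖v i‖ = Real.sqrt (‖v i‖^2) from (Real.sqrt_sq (norm_nonneg _)).symm]
    refine Real.sqrt_le_sqrt ?_
    exact Finset.single_le_sum (f := fun j => ‖v j‖^2) (fun j _ => by positivity)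
      (Finset.mem_univ i)
  have happ : ∀ i, (Matrix.toEuclideanCLM (𝕜 := ℂ) M v) i = M.mulVec v i := fun i => rfl
  have hr : ∀ i, ‖M.mulVec v i‖ ≤ 2 * e * ‖v‖ := by
    intro i
    have hmv : M.mulVec v i = M i 0 * v 0 + M i 1 * v 1 := by
      simp [Matrix.mulVec, dotProduct, Fin.sum_univ_two]
    rw [hmv]
    refine le_trans (norm_add_le _ _) ?_
    rw [norm_mul, norm_mul]
    have b0 : ‖M i 0‖ * ‖v 0‖ ≤ e * ‖v‖ := mul_le_mul (h i 0) (hv 0) (norm_nonneg _) he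
    have b1 : ‖M i 1‖ * ‖v 1‖ ≤ e * ‖v‖ := mul_le_mul (h i 1) (hv 1) (norm_nonneg _) he
    linarith
  have hTn : ‖(Matrix.toEuclideanCLM (𝕜 := ℂ) M) v‖
      = Real.sqrt (‖M.mulVec v 0‖^2 + ‖M.mulVec v 1‖^2) := by
    rw [EuclideanSpace.norm_eq, Fin.sum_univ_two, happ 0, happ 1]
  rw [hTn]
  have h0 := hr 0
  have h1 := hr 1
  have hnn : (0:ℝ) ≤ ‖M.mulVec v 0‖ := norm_nonneg _
  have hnn1 : (0:ℝ) ≤ ‖M.mulVec v 1‖ := norm_nonneg _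
  have hsq : ‖M.mulVec v 0‖^2 + ‖M.mulVec v 1‖^2 ≤ (4*e*‖v‖)^2 := by
    nlinarith [norm_nonneg v]
  refine le_trans (Real.sqrt_le_sqrt hsq) ?_
  rw [Real.sqrt_sq (by positivity)]

lemma grid_cover_aux {c T s x : ℝ} (hs : 0 < s) (hx1 : c ≤ x) (hx2 : x ≤ c + T) :
    ∃ j : ℕ, (j:ℝ)*s ≤ T ∧ |x - (c + (j:ℝ)*s)| ≤ s := by
  refine ⟨⌊(x-c)/s⌋₊, ?_, ?_⟩
  · have h1 : (⌊(x-c)/s⌋₊:ℝ) ≤ (x-c)/s := Nat.floor_le (div_nonneg (by linarith) hs.le)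
    have h1' : (⌊(x-c)/s⌋₊:ℝ) * s ≤ x - c := (le_div_iff₀ hs).mp h1
    linarith
  · have h1 : (⌊(x-c)/s⌋₊:ℝ) ≤ (x-c)/s := Nat.floor_le (div_nonneg (by linarith) hs.le)
    have h1' : (⌊(x-c)/s⌋₊:ℝ) * s ≤ x - c := (le_div_iff₀ hs).mp h1
    have h2 : (x-c)/s < (⌊(x-c)/s⌋₊:ℝ) + 1 := Nat.lt_floor_add_one _
    have h2' : x - c < ((⌊(x-c)/s⌋₊:ℝ) + 1) * s := (div_lt_iff₀ hs).mp h2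
    rw [abs_le]
    constructor <;> nlinarith

lemma opNormM_sub_triangle_aux (A B C : Matrix (Fin 2) (Fin 2) ℂ) :
    opNormM (A - C) ≤ opNormM (A - B) + opNormM (B - C) := by
  rw [opNormM, opNormM, opNormM, show A - C = (A - B) + (B - C) from (sub_add_sub_cancel A B C).symm,
    map_add]
  exact norm_add_le _ _

lemma opNormM_sub_comm_aux (A B : Matrix (Fin 2) (Fin 2) ℂ) :
    opNormM (A - B) = opNormM (B - A) := by
  rw [opNormM, opNormM, ← neg_sub B A, map_neg, norm_neg]

lemma tDist_le_aux {q : ℕ} (hq : 0 < q) {A B : Fin q → Matrix (Fin 2) (Fin 2) ℂ} {r : ℝ}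
    (h : ∀ i, opNormM (A i - B i) ≤ r) : tDist A B ≤ r := by
  haveI : Nonempty (Fin q) := ⟨⟨0, hq⟩⟩
  exact ciSup_le h

lemma le_tDist_aux {q : ℕ} {A B : Fin q → Matrix (Fin 2) (Fin 2) ℂ} (i : Fin q) :
    opNormM (A i - B i) ≤ tDist A B :=
  le_ciSup (f := fun i => opNormM (A i - B i)) (Set.Finite.bddAbove (Set.finite_range _)) i

/-- ε-nets of cardinality (C/ε)^{3q} for the set 𝒮_q of q-outcome
rank-one single-qubit POVMs, with respect to the metric `tDist`. -/
theorem epsnet_q_outcome :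
    ∃ C : ℝ, 0 < C ∧ ∀ q : ℕ, 2 ≤ q → ∀ ε : ℝ, 0 < ε → ε ≤ 1 →
      ∃ L : Finset (Fin q → Matrix (Fin 2) (Fin 2) ℂ),
        ↑L ⊆ Sq q ∧ (L.card : ℝ) ≤ (C / ε)^(3*q) ∧ IsNet L ε := by
  refine ⟨300, by norm_num, ?_⟩
  intro q hq ε hε hε1
  classical
  have hqpos : 0 < q := by omega
  haveI : Nonempty (Fin q) := ⟨⟨0, hqpos⟩⟩
  set δ : ℝ := ε/32 with hδdef
  have hδ0 : 0 < δ := by positivity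
  have hδ1 : δ ≤ 1 := by rw [hδdef]; linarith
  set N₁ : ℕ := ⌈1/δ⌉₊ with hN₁def
  set N₂ : ℕ := ⌈7/δ⌉₊ with hN₂def
  have hN₁pos : 0 < N₁ := Nat.ceil_pos.mpr (by positivity)
  have hN₂pos : 0 < N₂ := Nat.ceil_pos.mpr (by positivity)
  have hN₁r : (0:ℝ) < (N₁:ℝ) := by exact_mod_cast hN₁pos
  have hN₂r : (0:ℝ) < (N₂:ℝ) := by exact_mod_cast hN₂pos
  set s₁ : ℝ := 1/(N₁:ℝ) with hs₁def
  set s₂ : ℝ := 7/(N₂:ℝ) with hs₂def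
  have hs₁pos : 0 < s₁ := by rw [hs₁def]; positivity
  have hs₂pos : 0 < s₂ := by rw [hs₂def]; positivity
  have hle₁ : 1/δ ≤ (N₁:ℝ) := Nat.le_ceil _
  have hle₂ : 7/δ ≤ (N₂:ℝ) := Nat.le_ceil _
  have hs₁δ : s₁ ≤ δ := by
    rw [hs₁def, div_le_iff₀ hN₁r]
    have h2 := (div_le_iff₀ hδ0).mp hle₁
    linarith
  have hs₂δ : s₂ ≤ δ := by
    rw [hs₂def, div_le_iff₀ hN₂r]
    have h2 := (div_le_iff₀ hδ0).mp hle₂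
    linarith
  set G : (Fin q → Fin (N₁+1) × Fin (N₁+1) × Fin (N₂+1)) →
      (Fin q → Matrix (Fin 2) (Fin 2) ℂ) :=
    fun k i => mpAux ((((k i).1 : ℕ) : ℝ) * s₁) ((((k i).2.1 : ℕ) : ℝ) * s₁)
      (-Real.pi + (((k i).2.2 : ℕ) : ℝ) * s₂) with hGdef
  set P : (Fin q → Fin (N₁+1) × Fin (N₁+1) × Fin (N₂+1)) → Prop :=
    fun k => ∃ M' ∈ Sq q, tDist M' (G k) ≤ ε/2 with hPdef
  set L : Finset (Fin q → Matrix (Fin 2) (Fin 2) ℂ) :=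
    (Finset.univ.filter P).attach.image
      (fun k => ((Finset.mem_filter.mp k.2).2).choose) with hLdef
  refine ⟨L, ?_, ?_, ?_⟩
  · intro x hx
    rw [hLdef] at hx
    obtain ⟨k, -, rfl⟩ := Finset.mem_image.mp hx
    exact ((Finset.mem_filter.mp k.2).2).choose_spec.1
  · have hcard : L.card ≤ ((N₁+1) * ((N₁+1) * (N₂+1)))^q := by
      refine le_trans Finset.card_image_le ?_
      rw [Finset.card_attach]
      refine le_trans (Finset.card_filter_le _ _) ?_
      rw [Finset.card_univ]
      have hcf : Fintype.card (Fin q → Fin (N₁+1) × Fin (N₁+1) × Fin (N₂+1))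
          = ((N₁+1) * ((N₁+1) * (N₂+1)))^q := by
        simp [Fintype.card_fun]
      rw [hcf]
    have hN₁b : ((N₁:ℝ)+1) ≤ 34/ε := by
      have h1 : (N₁:ℝ) < 1/δ + 1 := Nat.ceil_lt_add_one (by positivity)
      have h2 : 1/δ = 32/ε := by rw [hδdef]; rw [one_div_div]
      have h3 : (2:ℝ) ≤ 2/ε := by rw [le_div_iff₀ hε]; linarith
      have h4 : (34:ℝ)/ε = 32/ε + 2/ε := by ring
      rw [h2] at h1
      rw [h4]
      linarith
    have hN₂b : ((N₂:ℝ)+1) ≤ 226/ε := by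
      have h1 : (N₂:ℝ) < 7/δ + 1 := Nat.ceil_lt_add_one (by positivity)
      have h2 : 7/δ = 224/ε := by rw [hδdef]; field_simp; ring
      have h3 : (2:ℝ) ≤ 2/ε := by rw [le_div_iff₀ hε]; linarith
      have h4 : (226:ℝ)/ε = 224/ε + 2/ε := by ring
      rw [h2] at h1
      rw [h4]
      linarith
    calc (L.card : ℝ) ≤ ((((N₁+1) * ((N₁+1) * (N₂+1)))^q : ℕ) : ℝ) := by exact_mod_cast hcard
    _ = (((N₁:ℝ)+1) * (((N₁:ℝ)+1) * ((N₂:ℝ)+1)))^q := by push_cast; ring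
    _ ≤ ((300/ε)^3)^q := by
        refine pow_le_pow_left₀ (by positivity) ?_ q
        have hb : ((N₁:ℝ)+1) * (((N₁:ℝ)+1) * ((N₂:ℝ)+1)) ≤ (34/ε) * ((34/ε) * (226/ε)) := by
          have p1 : (0:ℝ) ≤ (N₁:ℝ)+1 := by positivity
          have p2 : (0:ℝ) ≤ (N₂:ℝ)+1 := by positivity
          have p3 : (0:ℝ) ≤ 34/ε := by positivity
          exact mul_le_mul hN₁b (mul_le_mul hN₁b hN₂b p2 p3) (by positivity) p3
        refine le_trans hb ?_
        have he1 : (34/ε) * ((34/ε) * (226/ε)) = 261256/ε^3 := by ring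
        have he2 : ((300:ℝ)/ε)^3 = 27000000/ε^3 := by ring
        rw [he1, he2]
        gcongr
        norm_num
    _ = (300/ε)^(3*q) := by rw [pow_mul]
  · intro M hM
    obtain ⟨hMi, hMsum⟩ := hM
    have hdiagle : ∀ i (j : Fin 2), ((M i) j j).re ≤ 1 := by
      intro i j
      have hsre : ∑ i', ((M i') j j).re = 1 := by
        have h0 := congrFun (congrFun hMsum j) j
        rw [Matrix.sum_apply] at h0
        have h1 := congrArg Complex.re h0
        rw [Complex.re_sum] at h1
        simpa [Matrix.one_apply_eq] using h1
      have hnn : ∀ i' ∈ Finset.univ, 0 ≤ ((M i') j j).re := fun i' _ =>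
        (Complex.nonneg_iff.mp (psd_diag_aux (hMi i').1 j)).1
      have hsl := Finset.single_le_sum hnn (Finset.mem_univ i)
      rw [hsre] at hsl
      exact hsl
    have hparam : ∀ i, ∃ x y θ : ℝ, 0 ≤ x ∧ x ≤ 1 ∧ 0 ≤ y ∧ y ≤ 1 ∧
        -Real.pi ≤ θ ∧ θ ≤ Real.pi ∧ M i = mpAux x y θ := fun i =>
      exists_mp_aux (hMi i).1 (det_eq_zero_aux (hMi i).2) (hdiagle i 0) (hdiagle i 1)
    choose xf yf θf hx0 hx1 hy0 hy1 hθ0 hθ1 hmp using hparam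
    have h2pi : 2*Real.pi ≤ 7 := by nlinarith [Real.pi_lt_d2]
    have hgrid : ∀ i, ∃ k : Fin (N₁+1) × Fin (N₁+1) × Fin (N₂+1),
        |xf i - ((k.1 : ℕ) : ℝ) * s₁| ≤ s₁ ∧ |yf i - ((k.2.1 : ℕ) : ℝ) * s₁| ≤ s₁ ∧
        |θf i - (-Real.pi + ((k.2.2 : ℕ) : ℝ) * s₂)| ≤ s₂ ∧
        ((k.1 : ℕ) : ℝ)*s₁ ≤ 1 ∧ ((k.2.1 : ℕ) : ℝ)*s₁ ≤ 1 := by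
      intro i
      obtain ⟨j1, hj1a, hj1b⟩ := grid_cover_aux (c := 0) (T := 1) hs₁pos (hx0 i)
        (by have := hx1 i; linarith)
      obtain ⟨j2, hj2a, hj2b⟩ := grid_cover_aux (c := 0) (T := 1) hs₁pos (hy0 i)
        (by have := hy1 i; linarith)
      obtain ⟨j3, hj3a, hj3b⟩ := grid_cover_aux (c := -Real.pi) (T := 2*Real.pi) hs₂pos (hθ0 i)
        (by have := hθ1 i; linarith)
      have hb1 : j1 < N₁ + 1 := by
        have hr1 : (j1:ℝ)/(N₁:ℝ) ≤ 1 := by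
          rw [div_eq_mul_one_div]
          rw [hs₁def] at hj1a
          exact hj1a
        have hr2 : (j1:ℝ) ≤ (N₁:ℝ) := (div_le_one hN₁r).mp hr1
        have := Nat.cast_le (α := ℝ).mp hr2
        omega
      have hb2 : j2 < N₁ + 1 := by
        have hr1 : (j2:ℝ)/(N₁:ℝ) ≤ 1 := by
          rw [div_eq_mul_one_div]
          rw [hs₁def] at hj2a
          exact hj2a
        have hr2 : (j2:ℝ) ≤ (N₁:ℝ) := (div_le_one hN₁r).mp hr1
        have := Nat.cast_le (α := ℝ).mp hr2
        omega
      have hb3 : j3 < N₂ + 1 := by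
        have hr0 : (j3:ℝ) * s₂ ≤ 7 := le_trans hj3a h2pi
        rw [hs₂def] at hr0
        have hr1 : (j3:ℝ) * 7 ≤ 7 * (N₂:ℝ) := by
          have hmul := mul_le_mul_of_nonneg_right hr0 hN₂r.le
          have hee : (j3:ℝ) * (7/(N₂:ℝ)) * (N₂:ℝ) = (j3:ℝ) * 7 := by field_simp
          rw [hee] at hmul
          linarith
        have hr2 : (j3:ℝ) ≤ (N₂:ℝ) := by linarith
        have := Nat.cast_le (α := ℝ).mp hr2
        omega
      refine ⟨(⟨j1, hb1⟩, ⟨j2, hb2⟩, ⟨j3, hb3⟩), ?_, ?_, ?_, ?_, ?_⟩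
      · simpa using hj1b
      · simpa using hj2b
      · simpa using hj3b
      · simpa using hj1a
      · simpa using hj2a
    choose kf hk1 hk2 hk3 hk4 hk5 using hgrid
    have hMG : ∀ i, opNormM (M i - G kf i) ≤ ε/2 := by
      intro i
      rw [hGdef, hmp i]
      have hent := mp_close_aux hδ1 (hx0 i) (hx1 i) (hy0 i) (hy1 i)
        (by positivity) (hk4 i) (by positivity) (hk5 i)
        (le_trans (hk1 i) hs₁δ) (le_trans (hk2 i) hs₁δ) (le_trans (hk3 i) hs₂δ)
      have hop := opNormM_le_of_entry_aux hent
      have heq : 4*(4*δ) = ε/2 := by rw [hδdef]; ring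
      rw [heq] at hop
      exact hop
    have hPk : P kf := ⟨M, ⟨hMi, hMsum⟩, tDist_le_aux hqpos hMG⟩
    have hkmem : kf ∈ Finset.univ.filter P := Finset.mem_filter.mpr ⟨Finset.mem_univ _, hPk⟩
    have hspec := ((Finset.mem_filter.mp
      (⟨kf, hkmem⟩ : {x // x ∈ Finset.univ.filter P}).2).2).choose_spec
    refine ⟨((Finset.mem_filter.mp
      (⟨kf, hkmem⟩ : {x // x ∈ Finset.univ.filter P}).2).2).choose, ?_, ?_⟩
    · rw [hLdef]
      exact Finset.mem_image.mpr ⟨⟨kf, hkmem⟩, Finset.mem_attach _ _, rfl⟩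
    · refine tDist_le_aux hqpos ?_
      intro i
      have t1 : opNormM (M i - G kf i) ≤ ε/2 := hMG i
      have t2 : opNormM (G kf i - ((Finset.mem_filter.mp
          (⟨kf, hkmem⟩ : {x // x ∈ Finset.univ.filter P}).2).2).choose i) ≤ ε/2 := by
        rw [opNormM_sub_comm_aux]
        exact le_trans (le_tDist_aux i) hspec.2
      calc opNormM (M i - _) ≤ _ + _ := opNormM_sub_triangle_aux (M i) (G kf i) _
      _ ≤ ε/2 + ε/2 := add_le_add t1 t2
      _ = ε := by ring


end IQ
end
end

section
/- Let 𝓜 be a 1-pass LOCC strategy with q-outcome measurements in which every POVM element has rank 1, with output Z in the state discrimination game (for an arbitrary fixed encoding function E). Fix 0 < ε ≤ 1/(q·n·e) and let L be an ε-net for 𝒮_q with respect to the metric t. Let 𝓜' be the strategy obtained from 𝓜 by keeping the same qubit choices and replacing each measurement M ∈ 𝒮_q by a measurement M̃ ∈ L with t(M,M̃) ≤ ε, and let Z' be its output. Then |I(Z';U) − I(Z;U)| ≤ 2qn²ε + 2η(qnε), where η(x) := −x·lg x. -/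
open scoped BigOperators ComplexOrder

noncomputable section

namespace IQ

open Finset in
/-! -/
open Finset

/-! ### auxiliary entropy toolkit -/

/-- natural log version of eta -/
def etaE (x : ℝ) : ℝ := -(x * Real.log x)

lemma eta_eq_etaE (x : ℝ) : eta x = etaE x / Real.log 2 := by
  unfold eta etaE Real.logb; ring


/-- natural log version of η -/
lemma etaE_le_tangent {t m : ℝ} (ht : 0 ≤ t) (hm : 0 < m) :
    etaE t ≤ -(t * Real.log m) + m - t := by
  rcases eq_or_lt_of_le ht with h | h
  · simp [etaE, ← h]; positivity
  · have h1 : Real.log (m / t) ≤ m / t - 1 := Real.log_le_sub_one_of_pos (by positivity)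
    have h2 : Real.log (m / t) = Real.log m - Real.log t := Real.log_div hm.ne' h.ne'
    have h3 : t * (m / t) = m := by field_simp
    unfold etaE; nlinarith [mul_le_mul_of_nonneg_left h1 ht]

lemma etaE_nonneg {x : ℝ} (h0 : 0 ≤ x) (h1 : x ≤ 1) : 0 ≤ etaE x := by
  have : Real.log x ≤ 0 := Real.log_nonpos h0 h1
  unfold etaE; nlinarith

lemma etaE_mono {a b : ℝ} (ha : 0 ≤ a) (hab : a ≤ b) (hb : b ≤ (Real.exp 1)⁻¹) :
    etaE a ≤ etaE b := by
  rcases eq_or_lt_of_le (ha.trans hab) with h | h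
  · have hb0 : b = 0 := h.symm
    have ha0 : a = 0 := le_antisymm (hab.trans hb0.le) ha
    simp [ha0, hb0]
  · have h1 := etaE_le_tangent ha h
    have h2 : Real.log b ≤ -1 := by
      have := Real.log_le_log h (le_trans hb (le_of_eq rfl))
      calc Real.log b ≤ Real.log (Real.exp 1)⁻¹ := Real.log_le_log h hb
        _ = -1 := by rw [Real.log_inv, Real.log_exp]
    unfold etaE at *; nlinarith
lemma etaE_ge_self {x : ℝ} (h0 : 0 ≤ x) (hx : x ≤ (Real.exp 1)⁻¹) : x ≤ etaE x := by
  rcases eq_or_lt_of_le h0 with h | h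
  · simp [← h, etaE]
  · have h2 : Real.log x ≤ -1 := by
      calc Real.log x ≤ Real.log (Real.exp 1)⁻¹ := Real.log_le_log h hx
        _ = -1 := by rw [Real.log_inv, Real.log_exp]
    unfold etaE; nlinarith


def kapE (x y : ℝ) : ℝ := etaE x + etaE y - etaE (x + y)
lemma kapE_zero_left {y : ℝ} : kapE 0 y = 0 := by simp [kapE, etaE]
lemma kapE_zero_right {y : ℝ} : kapE y 0 = 0 := by simp [kapE, etaE]
lemma kapE_nonneg {x y : ℝ} (hx : 0 ≤ x) (hy : 0 ≤ y) : 0 ≤ kapE x y := by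
  unfold kapE etaE
  rcases eq_or_lt_of_le hx with h | h
  · simp [← h]
  rcases eq_or_lt_of_le hy with h' | h'
  · simp [← h']
  have l1 : Real.log x ≤ Real.log (x + y) := Real.log_le_log h (by linarith)
  have l2 : Real.log y ≤ Real.log (x + y) := Real.log_le_log h' (by linarith)
  nlinarith

variable {ι : Type*} [Fintype ι]

lemma kapE_eq {a c : ℝ} (ha : 0 < a) (hc : 0 < c) :
    kapE a c = a * (Real.log (a + c) - Real.log a) + c * (Real.log (a + c) - Real.log c) := by
  unfold kapE etaE; ring

lemma kapE_le_linear {a c A C : ℝ} (ha : 0 ≤ a) (hc : 0 ≤ c) (hA : 0 < A) (hC : 0 < C) :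
    kapE a c ≤ a * (Real.log (A + C) - Real.log A) + c * (Real.log (A + C) - Real.log C) := by
  have hLA : 0 ≤ Real.log (A + C) - Real.log A := by
    have := Real.log_le_log hA (by linarith : A ≤ A + C); linarith
  have hLC : 0 ≤ Real.log (A + C) - Real.log C := by
    have := Real.log_le_log hC (by linarith : C ≤ A + C); linarith
  rcases eq_or_lt_of_le ha with h | h
  · rw [← h, kapE_zero_left]; positivity
  rcases eq_or_lt_of_le hc with h' | h'
  · rw [← h', kapE_zero_right]; positivity
  have hac : 0 < a + c := by linarith
  have hAC : 0 < A + C := by linarith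
  have key_a : a * (Real.log (a + c) - Real.log a) ≤
      a * (Real.log (A + C) - Real.log A) + ((a + c) * A / (A + C) - a) := by
    have hr : (0:ℝ) < (a + c) * A / (a * (A + C)) := by positivity
    have h1 : Real.log ((a + c) * A / (a * (A + C))) ≤ (a + c) * A / (a * (A + C)) - 1 :=
      Real.log_le_sub_one_of_pos hr
    have h2 : Real.log ((a + c) * A / (a * (A + C))) =
        Real.log (a + c) + Real.log A - (Real.log a + Real.log (A + C)) := by
      rw [Real.log_div (by positivity) (by positivity), Real.log_mul hac.ne' hA.ne',
        Real.log_mul h.ne' hAC.ne']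
    have h3 : a * ((a + c) * A / (a * (A + C))) = (a + c) * A / (A + C) := by
      field_simp
    nlinarith [mul_le_mul_of_nonneg_left h1 ha]
  have key_c : c * (Real.log (a + c) - Real.log c) ≤
      c * (Real.log (A + C) - Real.log C) + ((a + c) * C / (A + C) - c) := by
    have hr : (0:ℝ) < (a + c) * C / (c * (A + C)) := by positivity
    have h1 : Real.log ((a + c) * C / (c * (A + C))) ≤ (a + c) * C / (c * (A + C)) - 1 :=
      Real.log_le_sub_one_of_pos hr
    have h2 : Real.log ((a + c) * C / (c * (A + C))) =
        Real.log (a + c) + Real.log C - (Real.log c + Real.log (A + C)) := by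
      rw [Real.log_div (by positivity) (by positivity), Real.log_mul hac.ne' hC.ne',
        Real.log_mul h'.ne' hAC.ne']
    have h3 : c * ((a + c) * C / (c * (A + C))) = (a + c) * C / (A + C) := by
      field_simp
    nlinarith [mul_le_mul_of_nonneg_left h1 hc]
  have hslack : (a + c) * A / (A + C) - a + ((a + c) * C / (A + C) - c) = 0 := by
    field_simp; ring
  rw [kapE_eq h h']
  linarith

lemma kapE_sum (a c : ι → ℝ) (ha : ∀ i, 0 ≤ a i) (hc : ∀ i, 0 ≤ c i) :
    ∑ i, kapE (a i) (c i) ≤ kapE (∑ i, a i) (∑ i, c i) := by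
  classical
  by_cases hA : ∑ i, a i = 0
  · have hz : ∀ i ∈ univ, a i = 0 := fun i hi =>
      (Finset.sum_eq_zero_iff_of_nonneg (fun j _ => ha j)).1 hA i hi
    have : ∀ i ∈ univ, kapE (a i) (c i) = 0 := fun i hi => by
      rw [hz i hi, kapE_zero_left]
    rw [Finset.sum_congr rfl this, Finset.sum_const, hA, kapE_zero_left]
    simp
  by_cases hC : ∑ i, c i = 0
  · have hz : ∀ i ∈ univ, c i = 0 := fun i hi =>
      (Finset.sum_eq_zero_iff_of_nonneg (fun j _ => hc j)).1 hC i hi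
    have : ∀ i ∈ univ, kapE (a i) (c i) = 0 := fun i hi => by
      rw [hz i hi, kapE_zero_right]
    rw [Finset.sum_congr rfl this, Finset.sum_const, hC, kapE_zero_right]
    simp
  have hA' : 0 < ∑ i, a i := (Finset.sum_nonneg fun i _ => ha i).lt_of_ne (Ne.symm hA)
  have hC' : 0 < ∑ i, c i := (Finset.sum_nonneg fun i _ => hc i).lt_of_ne (Ne.symm hC)
  calc ∑ i, kapE (a i) (c i)
      ≤ ∑ i, (a i * (Real.log ((∑ j, a j) + ∑ j, c j) - Real.log (∑ j, a j))
          + c i * (Real.log ((∑ j, a j) + ∑ j, c j) - Real.log (∑ j, c j))) :=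
        Finset.sum_le_sum fun i _ => kapE_le_linear (ha i) (hc i) hA' hC'
    _ = kapE (∑ i, a i) (∑ i, c i) := by
        rw [Finset.sum_add_distrib, ← Finset.sum_mul, ← Finset.sum_mul,
          kapE_eq hA' hC']

lemma etaE_sum_le' (s : Finset ι) (a : ι → ℝ) (ha : ∀ i, 0 ≤ a i) :
    etaE (∑ i ∈ s, a i) ≤ ∑ i ∈ s, etaE (a i) := by
  classical
  induction s using Finset.cons_induction with
  | empty => simp [etaE]
  | cons i s hi ih =>
    rw [Finset.sum_cons, Finset.sum_cons]
    have := kapE_nonneg (ha i) (Finset.sum_nonneg fun j _ => ha j : 0 ≤ ∑ j ∈ s, a j)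
    unfold kapE at this
    linarith

lemma etaE_sum_le_log_card (a : ι → ℝ) (ha : ∀ i, 0 ≤ a i) :
    ∑ i, etaE (a i) ≤ (∑ i, a i) * Real.log (Fintype.card ι) + etaE (∑ i, a i) := by
  classical
  by_cases hA : ∑ i, a i = 0
  · have hz : ∀ i ∈ univ, a i = 0 := fun i hi =>
      (Finset.sum_eq_zero_iff_of_nonneg (fun j _ => ha j)).1 hA i hi
    have : ∀ i ∈ univ, etaE (a i) = 0 := fun i hi => by rw [hz i hi]; simp [etaE]
    rw [Finset.sum_congr rfl this, hA]
    simp [etaE]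
  have hA' : 0 < ∑ i, a i := (Finset.sum_nonneg fun i _ => ha i).lt_of_ne (Ne.symm hA)
  have hcard : 0 < (Fintype.card ι : ℝ) := by
    have : Nonempty ι := by
      by_contra h
      rw [not_nonempty_iff] at h
      exact hA (by simp)
    exact_mod_cast Fintype.card_pos
  set A := ∑ i, a i
  set d := (Fintype.card ι : ℝ)
  have hm : 0 < A / d := by positivity
  have tang : ∀ i ∈ univ, etaE (a i) ≤ -(a i * Real.log (A / d)) + A / d - a i :=
    fun i _ => by
      have h := (by
        rcases eq_or_lt_of_le (ha i) with h | h
        · rw [← h]; simp [etaE]; positivity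
        · have h1 : Real.log ((A/d) / a i) ≤ (A/d) / a i - 1 :=
            Real.log_le_sub_one_of_pos (by positivity)
          have h2 : Real.log ((A/d) / a i) = Real.log (A/d) - Real.log (a i) :=
            Real.log_div hm.ne' h.ne'
          have h3 : a i * ((A/d) / a i) = A / d := by field_simp
          unfold etaE; nlinarith [mul_le_mul_of_nonneg_left h1 (ha i)] :
        etaE (a i) ≤ -(a i * Real.log (A / d)) + A / d - a i)
      exact h
  calc ∑ i, etaE (a i) ≤ ∑ i, (-(a i * Real.log (A / d)) + A / d - a i) :=
        Finset.sum_le_sum tang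
    _ = -(A * Real.log (A / d)) + d * (A / d) - A := by
        rw [Finset.sum_sub_distrib, Finset.sum_add_distrib, Finset.sum_neg_distrib,
          ← Finset.sum_mul, Finset.sum_const]
        simp [mul_comm]
        rfl
    _ = A * Real.log d + etaE A := by
        rw [Real.log_div hA'.ne' hcard.ne']
        field_simp [etaE]
        unfold etaE; ring


variable {σ τ : Type*} [Fintype σ] [Fintype τ]

/-- unnormalized conditional-entropy summand -/
def fE (a : τ → ℝ) : ℝ := (∑ u, etaE (a u)) - etaE (∑ u, a u)

/-- unnormalized conditional entropy H(U|Z) (times log 2) of a nonneg weight matrix -/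
def GE (R : σ → τ → ℝ) : ℝ := ∑ z, fE (R z)

lemma fE_nonneg {a : τ → ℝ} (ha : ∀ u, 0 ≤ a u) : 0 ≤ fE a := by
  have := etaE_sum_le' univ a ha
  unfold fE; linarith

lemma fE_le {a : τ → ℝ} (ha : ∀ u, 0 ≤ a u) :
    fE a ≤ (∑ u, a u) * Real.log (Fintype.card τ) := by
  have := etaE_sum_le_log_card a ha
  unfold fE; linarith

lemma fE_superadd {a c : τ → ℝ} (ha : ∀ u, 0 ≤ a u) (hc : ∀ u, 0 ≤ c u) :
    fE a + fE c ≤ fE (a + c) := by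
  have h := kapE_sum a c ha hc
  unfold kapE at h
  have e1 : ∀ u ∈ univ, etaE (a u) + etaE (c u) - etaE (a u + c u)
      = etaE (a u) + etaE (c u) - etaE ((a + c) u) := fun u _ => by simp
  rw [Finset.sum_congr rfl e1] at h
  unfold fE
  have e2 : ∑ u, (a + c) u = (∑ u, a u) + ∑ u, c u := by
    simp [Finset.sum_add_distrib]
  rw [e2]
  have e3 : ∑ u, (etaE (a u) + etaE (c u) - etaE ((a + c) u))
      = (∑ u, etaE (a u)) + (∑ u, etaE (c u)) - ∑ u, etaE ((a + c) u) := by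
    rw [Finset.sum_sub_distrib, Finset.sum_add_distrib]
  rw [e3] at h
  linarith

lemma fE_subadd {a c : τ → ℝ} (ha : ∀ u, 0 ≤ a u) (hc : ∀ u, 0 ≤ c u) :
    fE (a + c) ≤ fE a + fE c + kapE (∑ u, a u) (∑ u, c u) := by
  have h : (0:ℝ) ≤ ∑ u, kapE (a u) (c u) :=
    Finset.sum_nonneg fun u _ => kapE_nonneg (ha u) (hc u)
  unfold kapE at h ⊢
  have e3 : ∑ u, (etaE (a u) + etaE (c u) - etaE (a u + c u))
      = (∑ u, etaE (a u)) + (∑ u, etaE (c u)) - ∑ u, etaE (a u + c u) := by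
    rw [Finset.sum_sub_distrib, Finset.sum_add_distrib]
  rw [e3] at h
  unfold fE
  have e2 : ∑ u, (a + c) u = (∑ u, a u) + ∑ u, c u := by
    simp [Finset.sum_add_distrib]
  have e4 : ∑ u, etaE ((a + c) u) = ∑ u, etaE (a u + c u) := by
    apply Finset.sum_congr rfl; intro u _; simp
  rw [e2, e4]
  linarith

lemma GE_nonneg {R : σ → τ → ℝ} (hR : ∀ z u, 0 ≤ R z u) : 0 ≤ GE R :=
  Finset.sum_nonneg fun z _ => fE_nonneg (hR z)

lemma GE_le {R : σ → τ → ℝ} (hR : ∀ z u, 0 ≤ R z u) :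
    GE R ≤ (∑ z, ∑ u, R z u) * Real.log (Fintype.card τ) := by
  unfold GE
  rw [Finset.sum_mul]
  exact Finset.sum_le_sum fun z _ => fE_le (hR z)

lemma GE_superadd {R S : σ → τ → ℝ} (hR : ∀ z u, 0 ≤ R z u) (hS : ∀ z u, 0 ≤ S z u) :
    GE R + GE S ≤ GE (R + S) := by
  unfold GE
  rw [← Finset.sum_add_distrib]
  exact Finset.sum_le_sum fun z _ => by
    have := fE_superadd (hR z) (hS z)
    simpa using this

lemma GE_subadd {R S : σ → τ → ℝ} (hR : ∀ z u, 0 ≤ R z u) (hS : ∀ z u, 0 ≤ S z u) :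
    GE (R + S) ≤ GE R + GE S + kapE (∑ z, ∑ u, R z u) (∑ z, ∑ u, S z u) := by
  unfold GE
  calc ∑ z, fE ((R + S) z) ≤ ∑ z, (fE (R z) + fE (S z) + kapE (∑ u, R z u) (∑ u, S z u)) := by
        apply Finset.sum_le_sum
        intro z _
        have := fE_subadd (hR z) (hS z)
        simpa using this
    _ = (∑ z, fE (R z)) + (∑ z, fE (S z)) + ∑ z, kapE (∑ u, R z u) (∑ u, S z u) := by
        rw [Finset.sum_add_distrib, Finset.sum_add_distrib]
    _ ≤ (∑ z, fE (R z)) + (∑ z, fE (S z)) + kapE (∑ z, ∑ u, R z u) (∑ z, ∑ u, S z u) := by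
        have := kapE_sum (fun z => ∑ u, R z u) (fun z => ∑ u, S z u)
          (fun z => Finset.sum_nonneg fun u _ => hR z u)
          (fun z => Finset.sum_nonneg fun u _ => hS z u)
        linarith

/-- AFW-type one-sided continuity bound for unnormalized conditional entropy -/
lemma GE_diff_le (P Q : σ → τ → ℝ) (hP : ∀ z u, 0 ≤ P z u) (hQ : ∀ z u, 0 ≤ Q z u)
    (hPsum : ∑ z, ∑ u, P z u = 1) (hQsum : ∑ z, ∑ u, Q z u = 1) :
    GE P - GE Q ≤ (∑ z, ∑ u, max (Q z u - P z u) 0) * Real.log (Fintype.card τ)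
      + kapE 1 (∑ z, ∑ u, max (Q z u - P z u) 0) := by
  classical
  set D : σ → τ → ℝ := fun z u => max (Q z u - P z u) 0 with hD
  set D' : σ → τ → ℝ := fun z u => max (P z u - Q z u) 0 with hD'
  have hDn : ∀ z u, 0 ≤ D z u := fun z u => le_max_right _ _
  have hD'n : ∀ z u, 0 ≤ D' z u := fun z u => le_max_right _ _
  have hPD : P + D = Q + D' := by
    funext z; funext u
    simp only [Pi.add_apply, hD, hD']
    rcases le_total (P z u) (Q z u) with h | h
    · rw [max_eq_left (by linarith), max_eq_right (by linarith)]; ring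
    · rw [max_eq_right (by linarith), max_eq_left (by linarith)]; ring
  have hmass : ∑ z, ∑ u, D' z u = ∑ z, ∑ u, D z u := by
    have : ∀ z u, D' z u = D z u - (Q z u - P z u) := by
      intro z u
      simp only [hD, hD']
      rcases le_total (P z u) (Q z u) with h | h
      · rw [max_eq_right (by linarith : P z u - Q z u ≤ 0),
          max_eq_left (by linarith : (0:ℝ) ≤ Q z u - P z u)]; ring
      · rw [max_eq_left (by linarith : (0:ℝ) ≤ P z u - Q z u),
          max_eq_right (by linarith : Q z u - P z u ≤ 0)]; ring
    calc ∑ z, ∑ u, D' z u = ∑ z, ∑ u, (D z u - (Q z u - P z u)) := by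
          apply Finset.sum_congr rfl; intro z _; apply Finset.sum_congr rfl
          intro u _; rw [this]
      _ = ∑ z, ∑ u, D z u := by
          simp only [Finset.sum_sub_distrib]
          rw [hPsum, hQsum]
          ring
  have step1 : GE P + GE D ≤ GE (P + D) := GE_superadd hP hDn
  have step2 : GE (P + D) = GE (Q + D') := by rw [hPD]
  have step3 : GE (Q + D') ≤ GE Q + GE D' + kapE 1 (∑ z, ∑ u, D' z u) := by
    have := GE_subadd hQ hD'n
    rwa [hQsum] at this
  have step4 : GE D' ≤ (∑ z, ∑ u, D' z u) * Real.log (Fintype.card τ) := GE_le hD'n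
  have step5 : 0 ≤ GE D := GE_nonneg hDn
  rw [hmass] at step3 step4
  linarith


/-- probability tree kernel product -/
def kprod {n q : ℕ} (f : (a : Fin n) → (Fin a.val → Fin q) → Fin q → ℝ)
    (z : Fin n → Fin q) : ℝ :=
  ∏ a, f a (pre z a) (z a)

/-- the subtree kernel after first outcome ζ -/
def ktail {n q : ℕ} (f : (a : Fin (n+1)) → (Fin a.val → Fin q) → Fin q → ℝ) (ζ : Fin q) :
    (a : Fin n) → (Fin a.val → Fin q) → Fin q → ℝ :=
  fun a w ζ' => f a.succ (Fin.cons ζ w) ζ'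

lemma pre_cons {n q : ℕ} (ζ : Fin q) (w : Fin n → Fin q) (a : Fin n) :
    pre (Fin.cons ζ w) a.succ = Fin.cons ζ (pre w a) := by
  funext j
  refine Fin.cases ?_ ?_ j
  · have : Fin.castLE a.succ.isLt.le (0 : Fin (a.val + 1)) = 0 := rfl
    rw [pre, this, Fin.cons_zero, Fin.cons_zero]
  · intro k
    have h1 : Fin.castLE a.succ.isLt.le k.succ = (Fin.castLE a.isLt.le k).succ := rfl
    rw [pre, h1, Fin.cons_succ, Fin.cons_succ]
    rfl

lemma kprod_cons {n q : ℕ} (f : (a : Fin (n+1)) → (Fin a.val → Fin q) → Fin q → ℝ)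
    (ζ : Fin q) (w : Fin n → Fin q) :
    kprod f (Fin.cons ζ w) = f 0 (fun i => i.elim0) ζ * kprod (ktail f ζ) w := by
  rw [kprod, Fin.prod_univ_succ]
  have h1 : pre (Fin.cons ζ w) (0 : Fin (n+1)) = (fun i => i.elim0) :=
    funext fun i => i.elim0
  rw [h1, Fin.cons_zero]
  congr 1
  refine Finset.prod_congr rfl fun a _ => ?_
  rw [pre_cons, Fin.cons_succ]
  rfl

lemma sum_pi_fin_succ {n q : ℕ} (g : (Fin (n+1) → Fin q) → ℝ) :
    ∑ z, g z = ∑ ζ : Fin q, ∑ w : Fin n → Fin q, g (Fin.cons ζ w) := by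
  rw [← Equiv.sum_comp (Fin.consEquiv (fun _ => Fin q)) g, Fintype.sum_prod_type]
  rfl

lemma kprod_nonneg {n q : ℕ} {f : (a : Fin n) → (Fin a.val → Fin q) → Fin q → ℝ}
    (h : ∀ a w ζ, 0 ≤ f a w ζ) (z : Fin n → Fin q) : 0 ≤ kprod f z :=
  Finset.prod_nonneg fun a _ => h a _ _

lemma knorm {q : ℕ} : ∀ {n : ℕ} (f : (a : Fin n) → (Fin a.val → Fin q) → Fin q → ℝ),
    (∀ a w, ∑ ζ, f a w ζ = 1) → ∑ z, kprod f z = 1 := by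
  intro n
  induction n with
  | zero =>
    intro f _
    rw [Fintype.sum_unique]
    simp [kprod]
  | succ n ih =>
    intro f hsum
    rw [sum_pi_fin_succ (kprod f)]
    calc ∑ ζ : Fin q, ∑ w : Fin n → Fin q, kprod f (Fin.cons ζ w)
        = ∑ ζ : Fin q, f 0 (fun i => i.elim0) ζ * ∑ w, kprod (ktail f ζ) w := by
          apply Finset.sum_congr rfl; intro ζ _
          rw [Finset.mul_sum]
          apply Finset.sum_congr rfl; intro w _
          exact kprod_cons f ζ w
      _ = 1 := by
          have : ∀ ζ ∈ univ, f 0 (fun i => i.elim0) ζ * ∑ w, kprod (ktail f ζ) w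
              = f 0 (fun i => i.elim0) ζ := by
            intro ζ _
            rw [ih (ktail f ζ) (fun a w => hsum a.succ _), mul_one]
          rw [Finset.sum_congr rfl this, hsum 0 _]

lemma kTV {q : ℕ} {ε : ℝ} (hε : 0 ≤ ε) :
    ∀ {n : ℕ} (f f' : (a : Fin n) → (Fin a.val → Fin q) → Fin q → ℝ),
    (∀ a w ζ, 0 ≤ f a w ζ) → (∀ a w ζ, 0 ≤ f' a w ζ) →
    (∀ a w, ∑ ζ, f a w ζ = 1) → (∀ a w, ∑ ζ, f' a w ζ = 1) →
    (∀ a w ζ, |f' a w ζ - f a w ζ| ≤ ε) →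
    ∑ z, |kprod f' z - kprod f z| ≤ n * q * ε := by
  intro n
  induction n with
  | zero =>
    intro f f' _ _ _ _ _
    rw [Fintype.sum_unique]
    simp [kprod]
  | succ n ih =>
    intro f f' h0 h0' hs hs' hcl
    rw [sum_pi_fin_succ (fun z => |kprod f' z - kprod f z|)]
    have key : ∀ ζ : Fin q, ∑ w : Fin n → Fin q, |kprod f' (Fin.cons ζ w) - kprod f (Fin.cons ζ w)|
        ≤ ε + f 0 (fun i => i.elim0) ζ * (n * q * ε) := by
      intro ζ
      have hbd : ∀ w : Fin n → Fin q,
          |kprod f' (Fin.cons ζ w) - kprod f (Fin.cons ζ w)| ≤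
            |f' 0 (fun i => i.elim0) ζ - f 0 (fun i => i.elim0) ζ| * kprod (ktail f' ζ) w
            + f 0 (fun i => i.elim0) ζ * |kprod (ktail f' ζ) w - kprod (ktail f ζ) w| := by
        intro w
        rw [kprod_cons, kprod_cons]
        set x := f 0 (fun i => i.elim0) ζ
        set x' := f' 0 (fun i => i.elim0) ζ
        set A := kprod (ktail f ζ) w
        set A' := kprod (ktail f' ζ) w
        have : x' * A' - x * A = (x' - x) * A' + x * (A' - A) := by ring
        rw [this]
        refine (abs_add_le _ _).trans ?_
        rw [abs_mul, abs_mul, abs_of_nonneg (h0 0 _ _),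
          abs_of_nonneg (kprod_nonneg (f := ktail f' ζ) (fun a v ζ' => h0' a.succ (Fin.cons ζ v) ζ') w)]
      calc ∑ w, |kprod f' (Fin.cons ζ w) - kprod f (Fin.cons ζ w)|
          ≤ ∑ w, (|f' 0 (fun i => i.elim0) ζ - f 0 (fun i => i.elim0) ζ| * kprod (ktail f' ζ) w
            + f 0 (fun i => i.elim0) ζ * |kprod (ktail f' ζ) w - kprod (ktail f ζ) w|) :=
            Finset.sum_le_sum fun w _ => hbd w
        _ = |f' 0 (fun i => i.elim0) ζ - f 0 (fun i => i.elim0) ζ| * (∑ w, kprod (ktail f' ζ) w)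
            + f 0 (fun i => i.elim0) ζ * ∑ w, |kprod (ktail f' ζ) w - kprod (ktail f ζ) w| := by
            rw [Finset.sum_add_distrib, Finset.mul_sum, Finset.mul_sum]
        _ ≤ ε + f 0 (fun i => i.elim0) ζ * (n * q * ε) := by
            have e1 : ∑ w, kprod (ktail f' ζ) w = 1 :=
              knorm (ktail f' ζ) (fun a w => hs' a.succ _)
            have e2 : ∑ w, |kprod (ktail f' ζ) w - kprod (ktail f ζ) w| ≤ n * q * ε :=
              ih (ktail f ζ) (ktail f' ζ) (fun a w ζ' => h0 a.succ _ _)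
                (fun a w ζ' => h0' a.succ _ _) (fun a w => hs a.succ _)
                (fun a w => hs' a.succ _) (fun a w ζ' => hcl a.succ _ _)
            rw [e1, mul_one]
            have := mul_le_mul_of_nonneg_left e2 (h0 0 (fun i => i.elim0) ζ)
            have hcl0 := hcl 0 (fun i => i.elim0) ζ
            linarith
    calc ∑ ζ : Fin q, ∑ w : Fin n → Fin q, |kprod f' (Fin.cons ζ w) - kprod f (Fin.cons ζ w)|
        ≤ ∑ ζ : Fin q, (ε + f 0 (fun i => i.elim0) ζ * (n * q * ε)) :=
          Finset.sum_le_sum fun ζ _ => key ζ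
      _ = q * ε + 1 * (n * q * ε) := by
          rw [Finset.sum_add_distrib, Finset.sum_const, ← Finset.sum_mul,
            hs 0 (fun i => i.elim0)]
          simp [mul_comm]
      _ = (↑(n + 1) : ℝ) * ↑q * ε := by push_cast; ring


lemma sqrt2_ne : ((Real.sqrt 2 : ℝ) : ℂ) ≠ 0 := by
  simp only [ne_eq, Complex.ofReal_eq_zero]
  positivity

lemma alpha_unit (b c : Fin 2) : dotProduct (star (alpha b c)) (alpha b c) = 1 := by
  have h2 : ((Real.sqrt 2 : ℝ) : ℂ) * ((Real.sqrt 2 : ℝ) : ℂ) = 2 := by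
    rw [← Complex.ofReal_mul, Real.mul_self_sqrt (by norm_num)]
    norm_num
  fin_cases b <;> fin_cases c <;>
    simp [alpha, ket00, ket11, ketP, ketM, dotProduct, Fin.sum_univ_two,
      Complex.star_def, map_inv₀, Complex.conj_ofReal] <;>
    field_simp <;> rw [sq, h2] <;> ring

lemma expVal_one {ψ : Fin 2 → ℂ} (h : dotProduct (star ψ) ψ = 1) :
    expVal 1 ψ = 1 := by
  rw [expVal, Matrix.one_mulVec, h]
  rfl

lemma expVal_nonneg {M : Matrix (Fin 2) (Fin 2) ℂ} (h : M.PosSemidef) (ψ : Fin 2 → ℂ) :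
    0 ≤ expVal M ψ := by
  have := h.dotProduct_mulVec_nonneg ψ
  rw [Complex.le_def] at this
  simpa [expVal] using this.1

/-- expVal as an additive hom in the matrix -/
def expValHom (ψ : Fin 2 → ℂ) : Matrix (Fin 2) (Fin 2) ℂ →+ ℝ where
  toFun M := expVal M ψ
  map_zero' := by simp [expVal]
  map_add' A B := by
    simp [expVal, Matrix.add_mulVec, dotProduct_add]; ring

lemma expVal_sum {q : ℕ} (F : Fin q → Matrix (Fin 2) (Fin 2) ℂ) (ψ : Fin 2 → ℂ) :
    expVal (∑ ζ, F ζ) ψ = ∑ ζ, expVal (F ζ) ψ :=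
  map_sum (expValHom ψ) F Finset.univ

lemma expVal_sub_abs_le {A B : Matrix (Fin 2) (Fin 2) ℂ} {ψ : Fin 2 → ℂ}
    (h : dotProduct (star ψ) ψ = 1) :
    |expVal A ψ - expVal B ψ| ≤ opNormM (A - B) := by
  set x : EuclideanSpace ℂ (Fin 2) := WithLp.toLp 2 ψ with hxdef
  have hx : ‖x‖ = 1 := by
    have h1 : (inner ℂ x x : ℂ) = 1 := by
      rw [hxdef, EuclideanSpace.inner_toLp_toLp, dotProduct_comm, h]
    have h2 : ‖x‖^2 = 1 := by
      rw [← inner_self_eq_norm_sq (𝕜 := ℂ), h1]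
      rfl
    nlinarith [norm_nonneg x]
  have key : expVal A ψ - expVal B ψ =
      (inner ℂ x (Matrix.toEuclideanCLM (𝕜 := ℂ) (A - B) x) : ℂ).re := by
    have happ : Matrix.toEuclideanCLM (𝕜 := ℂ) (A - B) x =
        WithLp.toLp 2 ((A - B).mulVec ψ) := by
      exact Matrix.toEuclideanCLM_toLp _ _
    rw [happ, hxdef, EuclideanSpace.inner_toLp_toLp, dotProduct_comm, Matrix.sub_mulVec,
      dotProduct_sub, Complex.sub_re]
    rfl
  rw [key]
  calc |(inner ℂ x (Matrix.toEuclideanCLM (𝕜 := ℂ) (A - B) x) : ℂ).re|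
      ≤ ‖(inner ℂ x (Matrix.toEuclideanCLM (𝕜 := ℂ) (A - B) x) : ℂ)‖ :=
        Complex.abs_re_le_norm _
    _ ≤ ‖x‖ * ‖Matrix.toEuclideanCLM (𝕜 := ℂ) (A - B) x‖ := norm_inner_le_norm _ _
    _ ≤ ‖x‖ * (opNormM (A - B) * ‖x‖) := by
        gcongr
        exact ContinuousLinearMap.le_opNorm _ _
    _ = opNormM (A - B) := by rw [hx]; ring

lemma opNormM_le_tDist {q : ℕ} (M M' : Fin q → Matrix (Fin 2) (Fin 2) ℂ) (i : Fin q) :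
    opNormM (M i - M' i) ≤ tDist M M' :=
  le_ciSup (f := fun i => opNormM (M i - M' i)) (Set.Finite.bddAbove (Set.finite_range _)) i

lemma opNormM_neg_swap {A B : Matrix (Fin 2) (Fin 2) ℂ} :
    opNormM (A - B) = opNormM (B - A) := by
  unfold opNormM
  rw [show B - A = -(A - B) from (neg_sub A B).symm, map_neg, norm_neg]

lemma kapE_one {x : ℝ} (hx : 0 ≤ x) : kapE 1 x = etaE x + (1+x) * Real.log (1+x) := by
  unfold kapE etaE
  rw [Real.log_one]
  ring

lemma one_add_mul_log_le {x : ℝ} (h0 : 0 ≤ x) (h1 : x ≤ 1) :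
    (1+x) * Real.log (1+x) ≤ 2*x := by
  have hl : Real.log (1+x) ≤ x := by
    have := Real.log_le_sub_one_of_pos (by linarith : (0:ℝ) < 1 + x); linarith
  have hn : 0 ≤ Real.log (1+x) := Real.log_nonneg (by linarith)
  nlinarith

lemma max_sub_eq {a b : ℝ} : max (a - b) 0 = ((a-b) + |a-b|)/2 := by
  rcases le_total b a with h | h
  · rw [max_eq_left (by linarith), abs_of_nonneg (by linarith)]; ring
  · rw [max_eq_right (by linarith), abs_of_nonpos (by linarith)]; ring

lemma shannon_etaE {γ : Type*} [Fintype γ] (p : γ → ℝ) :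
    shannon p = (∑ x, etaE (p x)) / Real.log 2 := by
  unfold shannon etaE Real.logb
  rw [Finset.sum_div]
  exact Finset.sum_congr rfl fun x _ => by ring

lemma mutualInfo_eq_GE {σ τ : Type*} [Fintype σ] [Fintype τ] (P : σ → τ → ℝ) :
    mutualInfo P = shannon (fun u => ∑ z, P z u) - GE P / Real.log 2 := by
  have hjoint : shannon (fun p : σ × τ => P p.1 p.2)
      = (∑ z, ∑ u, etaE (P z u)) / Real.log 2 := by
    rw [shannon_etaE, Fintype.sum_prod_type]
  have hz : shannon (fun z => ∑ u, P z u)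
      = (∑ z, etaE (∑ u, P z u)) / Real.log 2 := shannon_etaE _
  have hGE : GE P = (∑ z, ∑ u, etaE (P z u)) - ∑ z, etaE (∑ u, P z u) := by
    unfold GE fE
    rw [Finset.sum_sub_distrib]
  unfold mutualInfo
  rw [hjoint, hz, hGE]
  ring




set_option maxHeartbeats 1000000 in
/-- Discretizing a rank-one 1-pass LOCC strategy over an ε-net,
with ε ≤ 1/(qne), changes the mutual information by at most 2qn²ε + 2η(qnε). -/
theorem discretization (n nt q : ℕ) (hq : 2 ≤ q) (hnt : nt ≤ n)
    (E : (Fin nt → Fin 2) → Fin n → Fin 2 × Fin 2)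
    (M M' : Strategy n q) (ε : ℝ) (hε0 : 0 < ε)
    (hε : ε ≤ 1 / (q * n * Real.exp 1))
    (hrank : ∀ a z ζ, (M.povm a z ζ).rank = 1)
    (L : Finset (Fin q → Matrix (Fin 2) (Fin 2) ℂ))
    (hLsub : ↑L ⊆ Sq q) (hLnet : IsNet L ε)
    (hQ : ∀ a z, M'.qubit a z = M.qubit a z)
    (hM'mem : ∀ a z, M'.povm a z ∈ L)
    (hM'close : ∀ a z, tDist (M.povm a z) (M'.povm a z) ≤ ε) :
    |mutualInfo (gameDist M' E) - mutualInfo (gameDist M E)| ≤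
      2 * q * n^2 * ε + 2 * eta (q * n * ε) := by
  classical
  have hL2 : (0:ℝ) < Real.log 2 := Real.log_pos (by norm_num)
  have hqR : (0:ℝ) < q := by exact_mod_cast Nat.lt_of_lt_of_le (by norm_num) hq
  have hn1 : 1 ≤ n := by
    rcases Nat.eq_zero_or_pos n with h | h
    · subst h; simp at hε; linarith
    · exact h
  have hnR : (1:ℝ) ≤ (n:ℝ) := by exact_mod_cast hn1
  set δ : ℝ := q * n * ε with hδdef
  have hδ0 : 0 < δ := by
    rw [hδdef]
    have : (0:ℝ) < (n:ℝ) := by linarith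
    positivity
  have hδe : δ ≤ (Real.exp 1)⁻¹ := by
    have he : (0:ℝ) < Real.exp 1 := Real.exp_pos 1
    have hq0 : (q:ℝ) ≠ 0 := ne_of_gt hqR
    have hn0 : (n:ℝ) ≠ 0 := by positivity
    calc δ = (q:ℝ) * n * ε := hδdef
      _ ≤ (q:ℝ) * n * (1 / ((q:ℝ) * n * Real.exp 1)) :=
          mul_le_mul_of_nonneg_left hε (by positivity)
      _ = (Real.exp 1)⁻¹ := by field_simp
  have hδ1 : δ ≤ 1 := by
    refine hδe.trans ?_
    rw [inv_le_one_iff₀]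
    right
    linarith [Real.exp_one_gt_d9]
  -- per-u kernel facts
  have key_u : ∀ u : Fin nt → Fin 2,
      (∀ z, 0 ≤ outcomeProb M (stateOf E u) z) ∧
      (∀ z, 0 ≤ outcomeProb M' (stateOf E u) z) ∧
      (∑ z, outcomeProb M (stateOf E u) z = 1) ∧
      (∑ z, outcomeProb M' (stateOf E u) z = 1) ∧
      (∑ z, |outcomeProb M' (stateOf E u) z - outcomeProb M (stateOf E u) z| ≤ n * q * ε) := by
    intro u
    have hunit : ∀ i, dotProduct (star (stateOf E u i)) (stateOf E u i) = 1 :=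
      fun i => alpha_unit _ _
    set f : (a : Fin n) → (Fin a.val → Fin q) → Fin q → ℝ :=
      fun a w ζ => expVal (M.povm a w ζ) (stateOf E u (M.qubit a w)) with hf
    set f' : (a : Fin n) → (Fin a.val → Fin q) → Fin q → ℝ :=
      fun a w ζ => expVal (M'.povm a w ζ) (stateOf E u (M.qubit a w)) with hf'
    have hout : outcomeProb M (stateOf E u) = kprod f := rfl
    have hout' : outcomeProb M' (stateOf E u) = kprod f' := by
      funext z
      unfold outcomeProb kprod
      exact Finset.prod_congr rfl fun a _ => by rw [hQ]
    have h0 : ∀ a w ζ, 0 ≤ f a w ζ := fun a w ζ => expVal_nonneg (M.povm_psd a w ζ) _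
    have h0' : ∀ a w ζ, 0 ≤ f' a w ζ := fun a w ζ => expVal_nonneg (M'.povm_psd a w ζ) _
    have hs : ∀ a w, ∑ ζ, f a w ζ = 1 := by
      intro a w
      show ∑ ζ, expVal (M.povm a w ζ) (stateOf E u (M.qubit a w)) = 1
      rw [← expVal_sum, M.povm_sum]
      exact expVal_one (hunit _)
    have hs' : ∀ a w, ∑ ζ, f' a w ζ = 1 := by
      intro a w
      show ∑ ζ, expVal (M'.povm a w ζ) (stateOf E u (M.qubit a w)) = 1
      rw [← expVal_sum, M'.povm_sum]
      exact expVal_one (hunit _)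
    have hcl : ∀ a w ζ, |f' a w ζ - f a w ζ| ≤ ε := by
      intro a w ζ
      refine (expVal_sub_abs_le (hunit _)).trans ?_
      rw [opNormM_neg_swap]
      exact (opNormM_le_tDist _ _ ζ).trans (hM'close a w)
    refine ⟨?_, ?_, ?_, ?_, ?_⟩
    · intro z; rw [hout]; exact kprod_nonneg h0 z
    · intro z; rw [hout']; exact kprod_nonneg h0' z
    · rw [hout]; exact knorm f hs
    · rw [hout']; exact knorm f' hs'
    · rw [hout, hout']; exact kTV hε0.le f f' h0 h0' hs hs' hcl
  have hcard : ((Fintype.card (Fin nt → Fin 2)):ℝ) = (2:ℝ)^nt := by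
    simp [Fintype.card_fun]
  have hUmP : ∀ u, ∑ z, gameDist M E z u = ((2:ℝ)^nt)⁻¹ := by
    intro u
    simp only [gameDist]
    rw [← Finset.mul_sum, (key_u u).2.2.1, mul_one]
  have hUmQ : ∀ u, ∑ z, gameDist M' E z u = ((2:ℝ)^nt)⁻¹ := by
    intro u
    simp only [gameDist]
    rw [← Finset.mul_sum, (key_u u).2.2.2.1, mul_one]
  have hone : ∑ _u : Fin nt → Fin 2, ((2:ℝ)^nt)⁻¹ = 1 := by
    rw [Finset.sum_const, Finset.card_univ, nsmul_eq_mul, hcard]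
    exact mul_inv_cancel₀ (by positivity)
  have hPsum : ∑ z, ∑ u, gameDist M E z u = 1 := by
    rw [Finset.sum_comm, Finset.sum_congr rfl fun u _ => hUmP u]
    exact hone
  have hQsum : ∑ z, ∑ u, gameDist M' E z u = 1 := by
    rw [Finset.sum_comm, Finset.sum_congr rfl fun u _ => hUmQ u]
    exact hone
  have hP0 : ∀ z u, 0 ≤ gameDist M E z u := fun z u => by
    simp only [gameDist]
    exact mul_nonneg (by positivity) ((key_u u).1 z)
  have hQ0 : ∀ z u, 0 ≤ gameDist M' E z u := fun z u => by
    simp only [gameDist]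
    exact mul_nonneg (by positivity) ((key_u u).2.1 z)
  have hTV : ∑ z, ∑ u, |gameDist M' E z u - gameDist M E z u| ≤ δ := by
    rw [Finset.sum_comm]
    have hb : ∀ u : Fin nt → Fin 2, ∑ z, |gameDist M' E z u - gameDist M E z u|
        ≤ ((2:ℝ)^nt)⁻¹ * (n * q * ε) := by
      intro u
      have e : ∀ z : Fin n → Fin q, |gameDist M' E z u - gameDist M E z u|
          = ((2:ℝ)^nt)⁻¹ * |outcomeProb M' (stateOf E u) z - outcomeProb M (stateOf E u) z| := by
        intro z
        simp only [gameDist]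
        rw [← mul_sub, abs_mul, abs_of_nonneg (by positivity : (0:ℝ) ≤ ((2:ℝ)^nt)⁻¹)]
      rw [Finset.sum_congr rfl fun z _ => e z, ← Finset.mul_sum]
      exact mul_le_mul_of_nonneg_left (key_u u).2.2.2.2 (by positivity)
    calc ∑ u, ∑ z, |gameDist M' E z u - gameDist M E z u|
        ≤ ∑ _u : Fin nt → Fin 2, ((2:ℝ)^nt)⁻¹ * ((n:ℝ) * q * ε) :=
          Finset.sum_le_sum fun u _ => hb u
      _ = (∑ _u : Fin nt → Fin 2, ((2:ℝ)^nt)⁻¹) * ((n:ℝ) * q * ε) := by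
          rw [Finset.sum_mul]
      _ = δ := by rw [hone, one_mul, hδdef]; ring
  -- positive-part masses
  set μ1 : ℝ := ∑ z, ∑ u, max (gameDist M' E z u - gameDist M E z u) 0 with hμ1def
  set μ2 : ℝ := ∑ z, ∑ u, max (gameDist M E z u - gameDist M' E z u) 0 with hμ2def
  have hzero : ∑ z, ∑ u, (gameDist M' E z u - gameDist M E z u) = 0 := by
    simp only [Finset.sum_sub_distrib]
    rw [hQsum, hPsum]
    ring
  have hzero' : ∑ z, ∑ u, (gameDist M E z u - gameDist M' E z u) = 0 := by
    simp only [Finset.sum_sub_distrib]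
    rw [hQsum, hPsum]
    ring
  have hTV' : ∑ z, ∑ u, |gameDist M E z u - gameDist M' E z u| ≤ δ := by
    have e : ∀ z ∈ Finset.univ, ∑ u, |gameDist M E z u - gameDist M' E z u|
        = ∑ u, |gameDist M' E z u - gameDist M E z u| := fun z _ =>
      Finset.sum_congr rfl fun u _ => abs_sub_comm _ _
    rw [Finset.sum_congr rfl e]
    exact hTV
  have hμ1δ : μ1 ≤ δ/2 := by
    rw [hμ1def]
    simp_rw [max_sub_eq, add_div, Finset.sum_add_distrib, ← Finset.sum_div]
    rw [hzero]
    have := hTV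
    linarith
  have hμ2δ : μ2 ≤ δ/2 := by
    rw [hμ2def]
    simp_rw [max_sub_eq, add_div, Finset.sum_add_distrib, ← Finset.sum_div]
    rw [hzero']
    have := hTV'
    linarith
  have hμ1n : 0 ≤ μ1 := Finset.sum_nonneg fun z _ =>
    Finset.sum_nonneg fun u _ => le_max_right _ _
  have hμ2n : 0 ≤ μ2 := Finset.sum_nonneg fun z _ =>
    Finset.sum_nonneg fun u _ => le_max_right _ _
  -- conditional-entropy continuity
  have hlogcard : Real.log ((Fintype.card (Fin nt → Fin 2)):ℝ) = nt * Real.log 2 := by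
    rw [hcard, Real.log_pow]
  have d1 := GE_diff_le (gameDist M E) (gameDist M' E) hP0 hQ0 hPsum hQsum
  have d2 := GE_diff_le (gameDist M' E) (gameDist M E) hQ0 hP0 hQsum hPsum
  rw [hlogcard, ← hμ1def] at d1
  rw [hlogcard, ← hμ2def] at d2
  have hbound : ∀ m : ℝ, 0 ≤ m → m ≤ δ/2 →
      m * ((nt:ℝ) * Real.log 2) + kapE 1 m
        ≤ δ/2 * ((nt:ℝ) * Real.log 2) + etaE δ + δ := by
    intro m hm0 hmδ
    have h1 : kapE 1 m = etaE m + (1+m)*Real.log (1+m) := kapE_one hm0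
    have hm1 : m ≤ 1 := by linarith
    have h2 : (1+m)*Real.log (1+m) ≤ 2*m := one_add_mul_log_le hm0 hm1
    have h3 : etaE m ≤ etaE δ := etaE_mono hm0 (by linarith) hδe
    have h4 : m * ((nt:ℝ) * Real.log 2) ≤ δ/2 * ((nt:ℝ) * Real.log 2) :=
      mul_le_mul_of_nonneg_right hmδ (by positivity)
    linarith
  have dd1 : GE (gameDist M E) - GE (gameDist M' E)
      ≤ δ/2 * ((nt:ℝ) * Real.log 2) + etaE δ + δ := d1.trans (hbound μ1 hμ1n hμ1δ)
  have dd2 : GE (gameDist M' E) - GE (gameDist M E)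
      ≤ δ/2 * ((nt:ℝ) * Real.log 2) + etaE δ + δ := d2.trans (hbound μ2 hμ2n hμ2δ)
  have dabs : |GE (gameDist M E) - GE (gameDist M' E)|
      ≤ δ/2 * ((nt:ℝ) * Real.log 2) + etaE δ + δ := abs_sub_le_iff.2 ⟨dd1, dd2⟩
  -- assemble
  rw [mutualInfo_eq_GE (gameDist M' E), mutualInfo_eq_GE (gameDist M E)]
  have hUeq : (fun u => ∑ z, gameDist M' E z u) = (fun u => ∑ z, gameDist M E z u) := by
    funext u; rw [hUmQ u, hUmP u]
  rw [hUeq]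
  have hrw : shannon (fun u => ∑ z, gameDist M E z u) - GE (gameDist M' E) / Real.log 2
      - (shannon (fun u => ∑ z, gameDist M E z u) - GE (gameDist M E) / Real.log 2)
      = (GE (gameDist M E) - GE (gameDist M' E)) / Real.log 2 := by ring
  rw [hrw, abs_div, abs_of_pos hL2, div_le_iff₀ hL2]
  have heta : eta ((q:ℝ)*(n:ℝ)*ε) = etaE δ / Real.log 2 := by
    rw [eta_eq_etaE, hδdef]
  rw [heta]
  have hexp : (2*(q:ℝ)*(n:ℝ)^2*ε + 2*(etaE δ / Real.log 2)) * Real.log 2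
      = 2*(δ*(n:ℝ))*Real.log 2 + 2*etaE δ := by
    have hc : etaE δ / Real.log 2 * Real.log 2 = etaE δ := div_mul_cancel₀ _ hL2.ne'
    calc (2*(q:ℝ)*(n:ℝ)^2*ε + 2*(etaE δ / Real.log 2)) * Real.log 2
        = 2*(q:ℝ)*(n:ℝ)^2*ε*Real.log 2 + 2*(etaE δ / Real.log 2 * Real.log 2) := by ring
      _ = 2*(δ*(n:ℝ))*Real.log 2 + 2*etaE δ := by rw [hc, hδdef]; ring
  rw [hexp]
  have hEδ : δ ≤ etaE δ := etaE_ge_self hδ0.le hδe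
  have hntR : (nt:ℝ) ≤ (n:ℝ) := by exact_mod_cast hnt
  have hp1 : δ/2 * ((nt:ℝ) * Real.log 2) ≤ δ/2 * ((n:ℝ) * Real.log 2) := by
    apply mul_le_mul_of_nonneg_left (mul_le_mul_of_nonneg_right hntR hL2.le) (by positivity)
  have hp2 : δ/2 * ((n:ℝ) * Real.log 2) ≤ 2*(δ*(n:ℝ))*Real.log 2 := by
    nlinarith [mul_nonneg (mul_nonneg hδ0.le (by linarith : (0:ℝ) ≤ (n:ℝ))) hL2.le]
  linarith [dabs]



end IQ
end
end

section
/- Let N ≥ 1 and let G ∈ ℂ^{N×N} be positive semidefinite with eigenvalues λ₁,…,λ_N. Then (1/N)·∑_{u=1}^N ((√G)_{uu})² ≥ ((1/N)·Tr √G)² = ((1/N)·∑_u √λ_u)² ≥ 1 − (2/√N)·‖G − I‖_F, where √G is the positive semidefinite square root of G and ‖·‖_F is the Frobenius norm. -/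
open scoped BigOperators ComplexOrder

noncomputable section

namespace IQ

/-- the positive semidefinite square root of a PSD matrix (the former `Matrix.PosSemidef.sqrt`) -/
def psdSqrt {n : Type*} [Fintype n] [DecidableEq n] {A : Matrix n n ℂ} (hA : A.PosSemidef) :
    Matrix n n ℂ :=
  (hA.1.eigenvectorUnitary : Matrix n n ℂ) * Matrix.diagonal ((↑) ∘ (√·) ∘ hA.1.eigenvalues) *
    (star hA.1.eigenvectorUnitary : Matrix n n ℂ)




private lemma pgm_aux_num (N : ℕ) (hN : 1 ≤ N) (lam : Fin N → ℝ) (hlam : ∀ u, 0 ≤ lam u) :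
    ((1/(N:ℝ)) * ∑ u, Real.sqrt (lam u))^2
      ≥ 1 - (2/Real.sqrt N) * Real.sqrt (∑ u, (lam u - 1)^2) := by
  set s := ∑ u, Real.sqrt (lam u) with hs
  set b' := Real.sqrt (∑ u, (lam u - 1)^2) with hb
  have hN0 : (0:ℝ) < N := by exact_mod_cast Nat.pos_of_ne_zero (by omega)
  set c := Real.sqrt (N:ℝ) with hc
  have hc0 : 0 < c := Real.sqrt_pos.2 hN0
  have hcc : c * c = N := Real.mul_self_sqrt hN0.le
  have hb0 : 0 ≤ b' := Real.sqrt_nonneg _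
  have hs0 : 0 ≤ s := Finset.sum_nonneg fun u _ => Real.sqrt_nonneg _
  have step1 : (N:ℝ) - s ≤ c * b' := by
    have h1 : (N:ℝ) - s = ∑ u, (1 - Real.sqrt (lam u)) := by
      rw [Finset.sum_sub_distrib]; simp [hs]
    have h2 : ∑ u, (1 - Real.sqrt (lam u)) ≤ ∑ u, |lam u - 1| := by
      apply Finset.sum_le_sum
      intro u _
      rcases le_or_gt (lam u) 1 with h | h
      · rw [abs_of_nonpos (by linarith)]
        have : lam u ≤ Real.sqrt (lam u) := by
          nlinarith [Real.sq_sqrt (hlam u), Real.sqrt_nonneg (lam u),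
            Real.sqrt_le_one.2 h, hlam u]
        linarith
      · have h4 : (1:ℝ) ≤ Real.sqrt (lam u) := by
          rw [Real.one_le_sqrt] <;> linarith
        have := abs_nonneg (lam u - 1)
        linarith
    have h3 : ∑ u, |lam u - 1| ≤ c * b' := by
      have hcs := Finset.sum_mul_sq_le_sq_mul_sq Finset.univ (fun _ => (1:ℝ))
        (fun u => |lam u - 1|)
      simp only [one_pow, one_mul, sq_abs, Finset.sum_const, Finset.card_univ,
        Fintype.card_fin, nsmul_eq_mul, mul_one] at hcs
      have hnn : 0 ≤ ∑ u, |lam u - 1| := Finset.sum_nonneg fun u _ => abs_nonneg _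
      have h5 : (∑ u, |lam u - 1|) = Real.sqrt ((∑ u, |lam u - 1|)^2) :=
        (Real.sqrt_sq hnn).symm
      rw [h5, hb, ← Real.sqrt_mul hN0.le]
      exact Real.sqrt_le_sqrt hcs
    linarith [h1 ▸ le_trans h2 h3]
  have key : ((1/(N:ℝ)) * s)^2 ≥ 2 * ((1/(N:ℝ)) * s) - 1 := by
    nlinarith [sq_nonneg ((1/(N:ℝ))*s - 1)]
  have h2c : (2/c) * b' = 2 * (c * b') / (N:ℝ) := by
    field_simp
    nlinarith [hcc]
  rw [ge_iff_le, h2c]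
  have hineq : (N:ℝ) * (1 - 2*(c*b')/(N:ℝ)) ≤ (N:ℝ) * (2*((1/(N:ℝ))*s) - 1) := by
    have e1 : (N:ℝ) * (1 - 2*(c*b')/(N:ℝ)) = N - 2*(c*b') := by field_simp
    have e2 : (N:ℝ) * (2*((1/(N:ℝ))*s) - 1) = 2*s - N := by field_simp
    rw [e1, e2]; linarith
  have hfin := le_of_mul_le_mul_left hineq hN0
  linarith [key, hfin]

/-- For an N×N positive semidefinite matrix G,
(1/N)∑_u ((√G)_{uu})² ≥ ((1/N)·Tr √G)² = ((1/N)·∑_u √λ_u)² ≥ 1 − (2/√N)·‖G − I‖_F. -/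
theorem pgm_gram_bound (N : ℕ) (hN : 1 ≤ N)
    (G : Matrix (Fin N) (Fin N) ℂ) (hG : G.PosSemidef) :
    (1/(N:ℝ)) * ∑ u, (((psdSqrt hG) u u).re)^2 ≥ ((1/(N:ℝ)) * ((psdSqrt hG).trace).re)^2 ∧
    ((1/(N:ℝ)) * ((psdSqrt hG).trace).re)^2
      = ((1/(N:ℝ)) * ∑ u, Real.sqrt (hG.1.eigenvalues u))^2 ∧
    ((1/(N:ℝ)) * ((psdSqrt hG).trace).re)^2 ≥ 1 - (2/Real.sqrt N) * frobNorm (G - 1) := by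
  classical
  set lam := hG.1.eigenvalues with hlamdef
  have hlam : ∀ u, 0 ≤ lam u := fun u => hG.eigenvalues_nonneg u
  have hN0 : (0:ℝ) < N := by exact_mod_cast Nat.pos_of_ne_zero (by omega)
  -- trace of sqrt
  have htrC : (psdSqrt hG).trace = ∑ u, ((Real.sqrt (lam u) : ℝ) : ℂ) := by
    unfold psdSqrt
    rw [Matrix.trace_mul_cycle]
    simp [← Matrix.mul_assoc, Matrix.UnitaryGroup.star_mul_self, Matrix.trace_diagonal, hlamdef]
  have htrre : ((psdSqrt hG).trace).re = ∑ u, Real.sqrt (lam u) := by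
    rw [htrC, Complex.re_sum]
    simp
  set s := ∑ u, Real.sqrt (lam u) with hs
  have hs0 : 0 ≤ s := Finset.sum_nonneg fun u _ => Real.sqrt_nonneg _
  -- diagonal entries of sqrt
  have hdiagre : ((psdSqrt hG).trace).re = ∑ u, (psdSqrt hG u u).re := by
    rw [Matrix.trace, Complex.re_sum]; rfl
  refine ⟨?_, ?_, ?_⟩
  · -- Cauchy-Schwarz part
    rw [hdiagre]
    have hcs := sq_sum_le_card_mul_sum_sq (s := Finset.univ)
      (f := fun u : Fin N => (psdSqrt hG u u).re)
    simp only [Finset.card_univ, Fintype.card_fin] at hcs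
    rw [ge_iff_le, mul_pow]
    calc (1/(N:ℝ))^2 * (∑ u, (psdSqrt hG u u).re)^2
        ≤ (1/(N:ℝ))^2 * ((N:ℝ) * ∑ u, ((psdSqrt hG u u).re)^2) := by
          apply mul_le_mul_of_nonneg_left _ (by positivity)
          exact_mod_cast hcs
      _ = (1/(N:ℝ)) * ∑ u, ((psdSqrt hG u u).re)^2 := by
          field_simp
  · rw [htrre]
  · -- main inequality
    rw [htrre]
    -- Frobenius norm via eigenvalues
    set U := hG.1.eigenvectorUnitary with hU
    have hsU : star U.1 * U.1 = 1 := Matrix.UnitaryGroup.star_mul_self U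
    have hUs : U.1 * star U.1 = 1 := Unitary.mul_star_self_of_mem U.2
    have cancel : ∀ X : Matrix (Fin N) (Fin N) ℂ, star U.1 * (U.1 * X) = X := by
      intro X; rw [← Matrix.mul_assoc, hsU, Matrix.one_mul]
    set D := Matrix.diagonal (fun u => ((lam u : ℂ) - 1)) with hD
    have hdiag : G - 1 = U.1 * D * star U.1 := by
      have h1 : (1 : Matrix (Fin N) (Fin N) ℂ) = U.1 * 1 * star U.1 := by
        rw [Matrix.mul_one, hUs]
      conv_lhs => rw [hG.1.spectral_theorem, Unitary.conjStarAlgAut_apply, h1]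
      rw [← Matrix.sub_mul, ← Matrix.mul_sub, ← Matrix.diagonal_one, hD, Matrix.diagonal_sub]
      rfl
    have hherm : (G - 1).conjTranspose = G - 1 := (hG.1.sub Matrix.isHermitian_one)
    have htr : ((G - 1).conjTranspose * (G - 1)).trace = ∑ u, ((lam u : ℂ) - 1)^2 := by
      rw [hherm, hdiag]
      have h2 : U.1 * D * star U.1 * (U.1 * D * star U.1) = U.1 * ((D * D) * star U.1) := by
        simp only [Matrix.mul_assoc, cancel]
      rw [h2, Matrix.trace_mul_comm, Matrix.mul_assoc, hsU, Matrix.mul_one,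
        hD, Matrix.diagonal_mul_diagonal, Matrix.trace_diagonal]
      simp [sq]
    have hre : ∑ i, ∑ j, ‖(G-1) i j‖^2 = (((G-1).conjTranspose * (G-1)).trace).re := by
      rw [Matrix.trace]
      simp only [Matrix.diag, Matrix.mul_apply, Matrix.conjTranspose_apply]
      rw [Complex.re_sum, Finset.sum_comm]
      congr 1; ext j
      rw [Complex.re_sum]
      congr 1; ext i
      rw [show star ((G-1) i j) = (starRingEnd ℂ) ((G-1) i j) from rfl,
        ← Complex.normSq_eq_conj_mul_self]
      simp [Complex.sq_norm]
    have hfr2 : ∑ i, ∑ j, ‖(G-1) i j‖^2 = ∑ u, (lam u - 1)^2 := by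
      rw [hre, htr, Complex.re_sum]
      congr 1; ext u
      have h3 : ((lam u : ℂ) - 1) ^ 2 = (((lam u - 1 : ℝ))^2 : ℝ) := by push_cast; ring
      rw [h3, Complex.ofReal_re]
    have hbdef : frobNorm (G - 1) = Real.sqrt (∑ u, (lam u - 1)^2) := by
      rw [frobNorm, hfr2]
    set b := frobNorm (G - 1) with hbb
    rw [hbdef]
    exact pgm_aux_num N hN lam hlam


end IQ
end
end

section
/- Let U be uniformly distributed on {0,1}^ñ and let Z be any random variable taking values in {0,1}^ñ (jointly distributed with U). Suppose Pr[Z = U] ≥ 1 − ε and that ε is small enough that 2√ε + 2^{−ñ} ≤ 1/e. Then I(Z;U) ≥ (1 − 5√ε)·ñ − η(2√ε), where η(x) := −x·lg x. -/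
open scoped BigOperators ComplexOrder

noncomputable section

namespace IQ

lemma logsum {ι : Type*} (s : Finset ι) (a b : ι → ℝ) (B : ℝ)
    (ha : ∀ i ∈ s, 0 ≤ a i) (hab : ∀ i ∈ s, a i ≤ b i)
    (hB : ∑ i ∈ s, b i ≤ B) :
    ∑ i ∈ s, a i * Real.logb 2 (b i / a i)
      ≤ (∑ i ∈ s, a i) * Real.logb 2 (B / ∑ i ∈ s, a i) := by
  have hl2 : (0:ℝ) < Real.log 2 := Real.log_pos one_lt_two
  set A := ∑ i ∈ s, a i with hA
  rcases eq_or_lt_of_le (Finset.sum_nonneg ha) with h0 | hApos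
  · have hz : ∀ i ∈ s, a i = 0 := (Finset.sum_eq_zero_iff_of_nonneg ha).1 h0.symm
    have hL : ∑ i ∈ s, a i * Real.logb 2 (b i / a i) = 0 :=
      Finset.sum_eq_zero fun i hi => by rw [hz i hi]; ring
    rw [hL, hA, ← h0]
    simp
  · have hBpos : 0 < B :=
      lt_of_lt_of_le hApos (le_trans (Finset.sum_le_sum hab) hB)
    have key : ∀ i ∈ s, a i * Real.logb 2 (b i / a i)
        ≤ a i * Real.logb 2 (B / A) + (b i * A / B - a i) / Real.log 2 := by
      intro i hi
      rcases eq_or_lt_of_le (ha i hi) with h0 | hpos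
      · rw [← h0]
        have hbi : 0 ≤ b i := le_trans (ha i hi) (hab i hi)
        have : 0 ≤ b i * A / B / Real.log 2 :=
          div_nonneg (div_nonneg (mul_nonneg hbi hApos.le) hBpos.le) hl2.le
        simpa using this
      · have hb : 0 < b i := lt_of_lt_of_le hpos (hab i hi)
        have hx : 0 < b i * A / (a i * B) := by positivity
        have hlog := Real.log_le_sub_one_of_pos hx
        have heq : Real.logb 2 (b i / a i) - Real.logb 2 (B / A)
            = Real.log (b i * A / (a i * B)) / Real.log 2 := by
          unfold Real.logb
          rw [Real.log_div hb.ne' hpos.ne', Real.log_div hBpos.ne' hApos.ne',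
            Real.log_div (by positivity) (by positivity),
            Real.log_mul hb.ne' hApos.ne', Real.log_mul hpos.ne' hBpos.ne']
          ring
        have h1 : a i * Real.logb 2 (b i / a i) - a i * Real.logb 2 (B / A)
            = a i * (Real.log (b i * A / (a i * B)) / Real.log 2) := by
          rw [← heq]; ring
        have h2 : a i * (Real.log (b i * A / (a i * B)) / Real.log 2)
            ≤ a i * ((b i * A / (a i * B) - 1) / Real.log 2) := by
          gcongr
        have h3 : a i * ((b i * A / (a i * B) - 1) / Real.log 2)
            = (b i * A / B - a i) / Real.log 2 := by
          field_simp
        linarith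
    calc ∑ i ∈ s, a i * Real.logb 2 (b i / a i)
        ≤ ∑ i ∈ s, (a i * Real.logb 2 (B / A) + (b i * A / B - a i) / Real.log 2) :=
          Finset.sum_le_sum key
      _ = A * Real.logb 2 (B / A) + ((∑ i ∈ s, b i) * A / B - A) / Real.log 2 := by
          rw [Finset.sum_add_distrib, ← Finset.sum_mul, ← Finset.sum_div,
            Finset.sum_sub_distrib, ← Finset.sum_div, ← Finset.sum_mul]
      _ ≤ A * Real.logb 2 (B / A) := by
          have h4 : (∑ i ∈ s, b i) * A / B ≤ A := by
            rw [div_le_iff₀ hBpos]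
            nlinarith
          have : ((∑ i ∈ s, b i) * A / B - A) / Real.log 2 ≤ 0 :=
            div_nonpos_of_nonpos_of_nonneg (by linarith) hl2.le
          linarith

lemma eta_nonneg {x : ℝ} (h0 : 0 ≤ x) (h1 : x ≤ 1) : 0 ≤ eta x := by
  have : Real.logb 2 x ≤ 0 := Real.logb_nonpos one_lt_two h0 h1
  have := mul_nonpos_of_nonneg_of_nonpos h0 this
  unfold eta; linarith

lemma eta_mono {x y : ℝ} (hx : 0 ≤ x) (hxy : x ≤ y) (hy : y ≤ (Real.exp 1)⁻¹) :
    eta x ≤ eta y := by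
  have hl2 : (0:ℝ) < Real.log 2 := Real.log_pos one_lt_two
  have hy1 : y ≤ 1 := hy.trans (by
    rw [inv_le_one_iff₀]
    right
    exact Real.one_le_exp zero_le_one)
  rcases eq_or_lt_of_le hx with h0 | hxpos
  · rw [← h0]
    have : eta 0 = 0 := by unfold eta; simp
    rw [this]
    exact eta_nonneg (hx.trans hxy) hy1
  · have hypos : 0 < y := lt_of_lt_of_le hxpos hxy
    -- reduce to natural log
    have hlogy : Real.log y ≤ -1 := by
      have := Real.log_le_log hypos hy
      rwa [Real.log_inv, Real.log_exp] at this
    have hln : -(x * Real.log x) ≤ -(y * Real.log y) := by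
      have h1 : Real.log (y / x) ≤ y / x - 1 := Real.log_le_sub_one_of_pos (by positivity)
      have h2 : x * Real.log (y / x) ≤ y - x := by
        have := mul_le_mul_of_nonneg_left h1 hxpos.le
        have hxx : x * (y / x - 1) = y - x := by field_simp
        linarith [hxx ▸ this]
      have h3 : Real.log (y / x) = Real.log y - Real.log x :=
        Real.log_div hypos.ne' hxpos.ne'
      nlinarith [hxy, hlogy]
    unfold eta Real.logb
    rw [show -(x * (Real.log x / Real.log 2)) = -(x * Real.log x) / Real.log 2 from by ring,
      show -(y * (Real.log y / Real.log 2)) = -(y * Real.log y) / Real.log 2 from by ring]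
    gcongr

lemma eta_le_lin {c : ℝ} (h0 : 0 ≤ c) : eta c ≤ (1 - c) / Real.log 2 := by
  have hl2 : (0:ℝ) < Real.log 2 := Real.log_pos one_lt_two
  rcases eq_or_lt_of_le h0 with h | hc
  · rw [← h]
    unfold eta; simp
    positivity
  · have h1 : Real.log c⁻¹ ≤ c⁻¹ - 1 := Real.log_le_sub_one_of_pos (by positivity)
    rw [Real.log_inv] at h1
    have h2 : -(c * Real.log c) ≤ 1 - c := by
      have := mul_le_mul_of_nonneg_left h1 hc.le
      have : c * -Real.log c ≤ c * (c⁻¹ - 1) := this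
      have hcc : c * (c⁻¹ - 1) = 1 - c := by field_simp
      nlinarith
    unfold eta Real.logb
    rw [show -(c * (Real.log c / Real.log 2)) = -(c * Real.log c) / Real.log 2 from by ring]
    gcongr

/-- If U is uniform on {0,1}^ñ, Z takes values in {0,1}^ñ,
Pr[Z = U] ≥ 1 − ε and 2√ε + 2^{−ñ} ≤ 1/e, then
I(Z;U) ≥ (1 − 5√ε)·ñ − η(2√ε). -/
theorem success_implies_info (nt : ℕ) (ε : ℝ) (hε : 0 ≤ ε)
    (P : (Fin nt → Fin 2) → (Fin nt → Fin 2) → ℝ)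
    (hpos : ∀ z u, 0 ≤ P z u)
    (hsum : ∑ z, ∑ u, P z u = 1)
    (hunif : ∀ u, ∑ z, P z u = ((2:ℝ)^nt)⁻¹)
    (hcorr : ∑ u, P u u ≥ 1 - ε)
    (hsmall : 2 * Real.sqrt ε + ((2:ℝ)^nt)⁻¹ ≤ (Real.exp 1)⁻¹) :
    mutualInfo P ≥ (1 - 5 * Real.sqrt ε) * nt - eta (2 * Real.sqrt ε) := by
  classical
  have hl2 : (0:ℝ) < Real.log 2 := Real.log_pos one_lt_two
  set s := Real.sqrt ε with hsdef
  have hs0 : 0 ≤ s := Real.sqrt_nonneg ε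
  have hexp1 : (Real.exp 1)⁻¹ ≤ 1 := by
    rw [inv_le_one_iff₀]; right; exact Real.one_le_exp zero_le_one
  have hse : 2*s ≤ (Real.exp 1)⁻¹ := by
    have : (0:ℝ) ≤ ((2:ℝ)^nt)⁻¹ := by positivity
    linarith
  have hs1 : s ≤ 1 := by linarith
  have hεs : ε ≤ s := by nlinarith [Real.mul_self_sqrt hε]
  -- case nt = 0
  rcases Nat.eq_zero_or_pos nt with hnt0 | hntpos
  · subst hnt0
    haveI : Subsingleton (Fin 0 → Fin 2) := ⟨fun a b => funext fun i => i.elim0⟩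
    set x : Fin 0 → Fin 2 := fun i => i.elim0 with hx
    have hall1 : ∀ f : (Fin 0 → Fin 2) → ℝ, ∑ y, f y = f x := by
      intro f
      exact Finset.sum_eq_single_of_mem x (Finset.mem_univ x)
        (fun b _ hb => absurd (Subsingleton.elim b x) hb)
    have hall2 : ∀ f : (Fin 0 → Fin 2) × (Fin 0 → Fin 2) → ℝ, ∑ y, f y = f (x, x) := by
      intro f
      exact Finset.sum_eq_single_of_mem (x, x) (Finset.mem_univ _)
        (fun b _ hb => absurd (Subsingleton.elim b (x, x)) hb)
    have hPxx : P x x = 1 := by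
      rw [hall1, hall1] at hsum
      exact hsum
    have hmi : mutualInfo P = 0 := by
      unfold mutualInfo shannon
      rw [hall2, hall1, hall1]
      simp only []
      rw [hall1 (fun u => P x u), hall1 (fun z => P z x), hPxx]
      simp
    rw [hmi]
    have := eta_nonneg (by linarith : (0:ℝ) ≤ 2*s) (by linarith)
    simp only [Nat.cast_zero, mul_zero, zero_sub, ge_iff_le]
    linarith
  -- main case
  have hnt1 : (1:ℝ) ≤ nt := by exact_mod_cast hntpos
  have hcardN : ((Fintype.card (Fin nt → Fin 2) : ℕ) : ℝ) = 2^nt := by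
    simp [Fintype.card_fun]
  have h2nt : ((2:ℝ)^nt) ≠ 0 := by positivity
  have hlogb_pow : Real.logb 2 ((2:ℝ)^nt) = nt := by
    rw [Real.logb_pow, Real.logb_self_eq_one one_lt_two, mul_one]
  have hlogb_pow_inv : Real.logb 2 ((2:ℝ)^nt)⁻¹ = -(nt:ℝ) := by
    rw [Real.logb_inv, hlogb_pow]
  -- H(U) = nt
  have hHU : shannon (fun u : Fin nt → Fin 2 => ∑ z, P z u) = nt := by
    unfold shannon
    simp only [hunif, hlogb_pow_inv]
    rw [Finset.sum_const, Finset.card_univ, nsmul_eq_mul, hcardN]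
    field_simp
  set pZ : (Fin nt → Fin 2) → ℝ := fun z => ∑ u, P z u with hpZdef
  set c : ℝ := ∑ z, P z z with hcdef
  have hc0 : 0 ≤ c := Finset.sum_nonneg fun z _ => hpos z z
  have hPle : ∀ z u, P z u ≤ pZ z := fun z u =>
    Finset.single_le_sum (fun u _ => hpos z u) (Finset.mem_univ u)
  have hpZ0 : ∀ z, 0 ≤ pZ z := fun z => Finset.sum_nonneg fun u _ => hpos z u
  have hpZsum : ∑ z, pZ z = 1 := hsum
  have hc1 : c ≤ 1 := by
    rw [← hsum]
    exact Finset.sum_le_sum fun z _ => hPle z z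
  have heε : 1 - c ≤ ε := by
    have : c ≥ 1 - ε := hcorr
    linarith
  -- rewrite the conditional entropy
  have hdiagsum : ∀ f : (Fin nt → Fin 2) → (Fin nt → Fin 2) → ℝ,
      ∑ p ∈ Finset.univ.filter
        (fun p : (Fin nt → Fin 2) × (Fin nt → Fin 2) => p.1 = p.2), f p.1 p.2
      = ∑ z, f z z := by
    intro f
    rw [Finset.sum_filter, Fintype.sum_prod_type]
    simp
  have hD : shannon (fun p : (Fin nt → Fin 2) × (Fin nt → Fin 2) => P p.1 p.2)
      - shannon pZ
      = ∑ p : (Fin nt → Fin 2) × (Fin nt → Fin 2),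
          P p.1 p.2 * Real.logb 2 (pZ p.1 / P p.1 p.2) := by
    unfold shannon
    have hstep : ∑ z, -(pZ z * Real.logb 2 (pZ z))
        = ∑ p : (Fin nt → Fin 2) × (Fin nt → Fin 2),
            -(P p.1 p.2 * Real.logb 2 (pZ p.1)) := by
      rw [Fintype.sum_prod_type]
      apply Finset.sum_congr rfl
      intro z _
      symm
      rw [Finset.sum_neg_distrib]
      congr 1
      show (∑ y, P z y * Real.logb 2 (pZ z)) = pZ z * Real.logb 2 (pZ z)
      rw [← Finset.sum_mul]
    rw [hstep, ← Finset.sum_sub_distrib]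
    apply Finset.sum_congr rfl
    intro p _
    by_cases hP : P p.1 p.2 = 0
    · simp [hP]
    · have hpz : pZ p.1 ≠ 0 :=
        ne_of_gt (lt_of_lt_of_le (lt_of_le_of_ne (hpos p.1 p.2) (Ne.symm hP)) (hPle p.1 p.2))
      rw [Real.logb_div hpz hP]
      ring
  -- bound the two parts
  set diag := Finset.univ.filter
    (fun p : (Fin nt → Fin 2) × (Fin nt → Fin 2) => p.1 = p.2) with hdiagdef
  have hdiag_le : ∑ p ∈ diag, P p.1 p.2 * Real.logb 2 (pZ p.1 / P p.1 p.2)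
      ≤ c * Real.logb 2 (1 / c) := by
    have hasum : ∑ p ∈ diag, P p.1 p.2 = c := hdiagsum _
    have hbsum : ∑ p ∈ diag, pZ p.1 = 1 := by
      rw [hdiagsum (fun z _ => pZ z)]
      exact hpZsum
    have := logsum diag (fun p => P p.1 p.2) (fun p => pZ p.1) 1
      (fun p _ => hpos _ _) (fun p _ => hPle _ _) (le_of_eq hbsum)
    rwa [hasum] at this
  have hoffa : ∑ p ∈ Finset.univ.filter
      (fun p : (Fin nt → Fin 2) × (Fin nt → Fin 2) => ¬ p.1 = p.2), P p.1 p.2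
      = 1 - c := by
    have hsp := Finset.sum_filter_add_sum_filter_not (Finset.univ)
      (fun p : (Fin nt → Fin 2) × (Fin nt → Fin 2) => p.1 = p.2)
      (fun p => P p.1 p.2)
    have htot : ∑ p : (Fin nt → Fin 2) × (Fin nt → Fin 2), P p.1 p.2 = 1 := by
      rw [Fintype.sum_prod_type]; exact hpZsum
    have hasum : ∑ p ∈ diag, P p.1 p.2 = c := hdiagsum _
    rw [htot, hasum] at hsp
    linarith
  have hoff_le : ∑ p ∈ Finset.univ.filter
      (fun p : (Fin nt → Fin 2) × (Fin nt → Fin 2) => ¬ p.1 = p.2),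
      P p.1 p.2 * Real.logb 2 (pZ p.1 / P p.1 p.2)
      ≤ (1 - c) * Real.logb 2 ((2:ℝ)^nt / (1 - c)) := by
    have hbsum : ∑ p ∈ Finset.univ.filter
        (fun p : (Fin nt → Fin 2) × (Fin nt → Fin 2) => ¬ p.1 = p.2), pZ p.1
        ≤ (2:ℝ)^nt := by
      calc (∑ p ∈ Finset.univ.filter (fun p : (Fin nt → Fin 2) × (Fin nt → Fin 2) => ¬ p.1 = p.2), pZ p.1)
          ≤ ∑ p : (Fin nt → Fin 2) × (Fin nt → Fin 2), pZ p.1 :=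
            Finset.sum_le_sum_of_subset_of_nonneg (Finset.filter_subset _ _)
              (fun p _ _ => hpZ0 p.1)
        _ = (2:ℝ)^nt := by
            rw [Fintype.sum_prod_type]
            have hz : ∀ z : Fin nt → Fin 2,
                (∑ _u : Fin nt → Fin 2, pZ (z, _u).1) = (2:ℝ)^nt * pZ z := by
              intro z
              show (∑ _u : Fin nt → Fin 2, pZ z) = _
              rw [Finset.sum_const, Finset.card_univ, nsmul_eq_mul, hcardN]
            rw [Finset.sum_congr rfl fun z _ => hz z, ← Finset.mul_sum, hpZsum, mul_one]
    have := logsum (Finset.univ.filter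
        (fun p : (Fin nt → Fin 2) × (Fin nt → Fin 2) => ¬ p.1 = p.2))
      (fun p => P p.1 p.2) (fun p => pZ p.1) ((2:ℝ)^nt)
      (fun p _ => hpos _ _) (fun p _ => hPle _ _) hbsum
    rwa [hoffa] at this
  -- combine
  have hDD : shannon (fun p : (Fin nt → Fin 2) × (Fin nt → Fin 2) => P p.1 p.2)
      - shannon pZ ≤ c * Real.logb 2 (1 / c) + (1 - c) * Real.logb 2 ((2:ℝ)^nt / (1 - c)) := by
    rw [hD, ← Finset.sum_filter_add_sum_filter_not (Finset.univ)
      (fun p : (Fin nt → Fin 2) × (Fin nt → Fin 2) => p.1 = p.2)]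
    exact add_le_add hdiag_le hoff_le
  -- identify the two terms
  have hterm1 : c * Real.logb 2 (1 / c) = eta c := by
    rw [one_div, Real.logb_inv]
    unfold eta
    ring
  have hterm2 : (1 - c) * Real.logb 2 ((2:ℝ)^nt / (1 - c))
      ≤ (1 - c) * nt + eta (1 - c) := by
    by_cases h0 : (1:ℝ) - c = 0
    · rw [h0]
      unfold eta
      simp
    · rw [Real.logb_div h2nt h0]
      rw [hlogb_pow]
      unfold eta
      ring_nf
      exact le_of_eq (by ring)
  -- numeric finish
  set e := 1 - c with hedef
  have he0 : 0 ≤ e := by linarith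
  have h1 : eta c ≤ e / Real.log 2 := by
    have := eta_le_lin hc0
    rwa [← hedef] at this
  have hlog2 : (0.6931471803:ℝ) < Real.log 2 := Real.log_two_gt_d9
  have h2 : e / Real.log 2 ≤ 2 * e := by
    rw [div_le_iff₀ hl2]
    nlinarith
  have h3 : eta e ≤ eta (2*s) := eta_mono he0 (by linarith) hse
  have hcond : shannon (fun p : (Fin nt → Fin 2) × (Fin nt → Fin 2) => P p.1 p.2)
      - shannon pZ ≤ 5 * s * nt + eta (2*s) := by
    have hent : e * nt ≤ s * nt :=
      mul_le_mul_of_nonneg_right (by linarith) (Nat.cast_nonneg nt)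
    have h4 : eta c ≤ 4 * s * nt := by
      have h5 : (2:ℝ) * e ≤ 2 * s := by linarith
      have h6 : (2:ℝ) * s ≤ 4 * s * nt := by
        have h7 : (4*s) * 1 ≤ (4*s) * nt :=
          mul_le_mul_of_nonneg_left hnt1 (by positivity)
        linarith
      linarith
    calc shannon (fun p : (Fin nt → Fin 2) × (Fin nt → Fin 2) => P p.1 p.2) - shannon pZ
        ≤ c * Real.logb 2 (1 / c) + (1 - c) * Real.logb 2 ((2:ℝ)^nt / (1 - c)) := hDD
      _ ≤ eta c + (e * nt + eta e) := by rw [hterm1]; exact add_le_add_right (by simpa [hedef] using hterm2) _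
      _ ≤ 4 * s * nt + (s * nt + eta (2*s)) := by
          have := add_le_add (add_le_add h4 hent) h3
          linarith
      _ = 5 * s * nt + eta (2*s) := by ring
  have hmi : mutualInfo P = shannon pZ + (nt:ℝ)
      - shannon (fun p : (Fin nt → Fin 2) × (Fin nt → Fin 2) => P p.1 p.2) := by
    unfold mutualInfo
    rw [hHU]
  rw [hmi]
  have : (1 - 5 * s) * nt - eta (2*s) = nt - (5 * s * nt + eta (2*s)) := by ring
  rw [this]
  linarith [hcond]

end IQ
end
end

section
/- Let |ψ⟩ = (α, β) be a unit vector in ℂ². Then (1/4)·( |⟨ψ|α₀₀⟩|⁴ + |⟨ψ|α₀₁⟩|⁴ + |⟨ψ|α₁₀⟩|⁴ + |⟨ψ|α₁₁⟩|⁴ ) = (1/8)·( 2 + |α² + β²|² ) ≤ 3/8. -/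
open scoped BigOperators ComplexOrder

noncomputable section

namespace IQ

/-- For a unit vector |ψ⟩ = (α,β) ∈ ℂ²,
(1/4)(|⟨ψ|α₀₀⟩|⁴ + |⟨ψ|α₀₁⟩|⁴ + |⟨ψ|α₁₀⟩|⁴ + |⟨ψ|α₁₁⟩|⁴)
  = (1/8)(2 + |α² + β²|²) ≤ 3/8. -/
theorem fourth_moment_bound (α β : ℂ) (h : ‖α‖^2 + ‖β‖^2 = 1) :
    (1/4 : ℝ) *
        (‖(starRingEnd ℂ) α * ket00 0 + (starRingEnd ℂ) β * ket00 1‖^4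
          + ‖(starRingEnd ℂ) α * ketP 0 + (starRingEnd ℂ) β * ketP 1‖^4
          + ‖(starRingEnd ℂ) α * ketM 0 + (starRingEnd ℂ) β * ketM 1‖^4
          + ‖(starRingEnd ℂ) α * ket11 0 + (starRingEnd ℂ) β * ket11 1‖^4)
      = (1/8 : ℝ) * (2 + ‖α^2 + β^2‖^2) ∧
    (1/8 : ℝ) * (2 + ‖α^2 + β^2‖^2) ≤ 3/8 := by
  have e0 : (starRingEnd ℂ) α * ket00 0 + (starRingEnd ℂ) β * ket00 1 = (starRingEnd ℂ) α := by
    simp [ket00]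
  have e1 : (starRingEnd ℂ) α * ket11 0 + (starRingEnd ℂ) β * ket11 1 = (starRingEnd ℂ) β := by
    simp [ket11]
  have eP : (starRingEnd ℂ) α * ketP 0 + (starRingEnd ℂ) β * ketP 1
      = (starRingEnd ℂ) (α + β) * ((Real.sqrt 2 : ℝ) : ℂ)⁻¹ := by
    simp [ketP]; ring
  have eM : (starRingEnd ℂ) α * ketM 0 + (starRingEnd ℂ) β * ketM 1
      = (starRingEnd ℂ) (α - β) * ((Real.sqrt 2 : ℝ) : ℂ)⁻¹ := by
    simp [ketM]; ring
  have hcn : ‖(((Real.sqrt 2 : ℝ) : ℂ)⁻¹)‖ = (Real.sqrt 2)⁻¹ := by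
    rw [norm_inv, Complex.norm_real, Real.norm_eq_abs, abs_of_nonneg (Real.sqrt_nonneg 2)]
  have hs4 : ((Real.sqrt 2)⁻¹)^4 = 1/4 := by
    have h2 : (Real.sqrt 2)^2 = 2 := Real.sq_sqrt (by norm_num)
    rw [inv_pow]
    rw [show (4:ℕ) = 2*2 from rfl, pow_mul, h2]
    norm_num
  have pow4 : ∀ z : ℂ, ‖z‖^4 = (z.re^2 + z.im^2)^2 := by
    intro z
    rw [show (4:ℕ) = 2*2 from rfl, pow_mul]
    congr 1
    rw [Complex.sq_norm, Complex.normSq_apply]; ring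
  have pow2 : ∀ z : ℂ, ‖z‖^2 = z.re^2 + z.im^2 := by
    intro z
    rw [Complex.sq_norm, Complex.normSq_apply]; ring
  have h' : α.re^2 + α.im^2 + (β.re^2 + β.im^2) = 1 := by rw [pow2, pow2] at h; exact h
  constructor
  · rw [e0, e1, eP, eM, norm_mul, norm_mul, hcn, mul_pow, mul_pow, hs4]
    rw [pow4, pow4, pow4, pow4, pow2]
    simp only [Complex.add_re, Complex.add_im, Complex.sub_re, Complex.sub_im,
      RingHom.map_add, RingHom.map_sub, Complex.conj_re, Complex.conj_im,
      Complex.mul_re, Complex.mul_im, pow_two]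
    linear_combination ((α.re^2 + α.im^2 + β.re^2 + β.im^2 + 1)/4) * h'
  · have hle : ‖α^2 + β^2‖ ≤ 1 := by
      calc ‖α^2 + β^2‖ ≤ ‖α^2‖ + ‖β^2‖ := norm_add_le _ _
        _ = ‖α‖^2 + ‖β‖^2 := by rw [norm_pow, norm_pow]
        _ = 1 := h
    nlinarith [norm_nonneg (α^2+β^2)]

end IQ
end
end

section
/- Let p_e := sin²(π/8). Fix constants λ ≥ 1, 0 < τ ≤ 1/2 − p_e, and θ > τ·h'(p_e), where h is the binary entropy function and h'(p) = lg((1−p)/p). Set k := n·(1 − h(p_e) − θ) and r := n·(p_e + τ). Let C : {0,1}^k → {0,1}^n be a random code whose 2^k codewords are independent and uniform on {0,1}^n; let S be uniform on {0,1}^k; let Z ∈ {0,1}^n be obtained from C(S) by flipping each bit independently with probability p_e; and let Ŝ be any decoder that outputs some t ∈ {0,1}^k with Hamming distance d_H(C(t), Z) ≤ r whenever such t exists (ties broken arbitrarily). Then for all sufficiently large n, with probability at least 1 − 1/λ over the choice of C, Pr[Ŝ = S] ≥ 1 − λ·[ e^{−2τ²n} + 2^{−n(θ − τ·h'(p_e))}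 ]. -/
open scoped BigOperators ComplexOrder

set_option maxHeartbeats 1000000

noncomputable section

namespace IQ

/-- Hamming distance on bit strings -/
def hamm {n : ℕ} (x y : Fin n → Fin 2) : ℕ :=
  (Finset.univ.filter fun a => x a ≠ y a).card

/-! ### Auxiliary lemmas for the noisy coding theorem -/

section NoisyCodingAux

open Finset

/-- Sum over a product space of a product factorizes. -/
lemma sum_pi_prod {ι β : Type*} [Fintype ι] [DecidableEq ι] [Fintype β] (g : ι → β → ℝ) :
    ∑ x : ι → β, ∏ a, g a (x a) = ∏ a, ∑ b, g a b := by
  have h := Finset.sum_prod_piFinset (Finset.univ : Finset β) g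
  rwa [Fintype.piFinset_univ] at h

lemma ite_nonneg01 {c : Prop} [Decidable c] : (0:ℝ) ≤ if c then (1:ℝ) else 0 := by
  split <;> norm_num

lemma prod_ite_card {ι : Type*} [Fintype ι] (P : ι → Prop) [DecidablePred P] (c : ℝ) :
    ∏ a, (if P a then c else 1) = c ^ (Finset.univ.filter P).card := by
  rw [Finset.prod_ite, Finset.prod_const, Finset.prod_const, one_pow, mul_one]

lemma fin2_self_ne_add : ∀ u v : Fin 2, (u ≠ u + v) ↔ v = 1 := by decide

lemma fin2_add_ne : ∀ u v : Fin 2, (u + v ≠ v) ↔ u = 1 := by decide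

lemma fin2_add_add : ∀ u v : Fin 2, u + v + v = u := by decide

lemma hamm_self_add {n : ℕ} (x e : Fin n → Fin 2) :
    hamm x (fun a => x a + e a) = (Finset.univ.filter fun a => e a = 1).card := by
  unfold hamm
  congr 1
  apply Finset.filter_congr
  intro a _
  exact fin2_self_ne_add (x a) (e a)

lemma hamm_add_right {n : ℕ} (x z : Fin n → Fin 2) :
    hamm (fun a => x a + z a) z = (Finset.univ.filter fun a => x a = 1).card := by
  unfold hamm
  congr 1
  apply Finset.filter_congr
  intro a _
  exact fin2_add_ne (x a) (z a)

/-- Hoeffding's lemma for a Bernoulli random variable. -/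
lemma hoeffding_bernoulli {p : ℝ} (hp0 : 0 ≤ p) (hp1 : p ≤ 1) (l : ℝ) (hl : 0 ≤ l) :
    1 - p + p * Real.exp l ≤ Real.exp (l * p + l ^ 2 / 8) := by
  rcases eq_or_lt_of_le hp0 with h0 | h0
  · rw [← h0]
    simpa using Real.one_le_exp (by positivity : (0:ℝ) ≤ l * 0 + l ^ 2 / 8)
  rcases eq_or_lt_of_le hp1 with h1 | h1
  · rw [h1]
    have hle : l ≤ l * 1 + l ^ 2 / 8 := by nlinarith [sq_nonneg l]
    simpa using Real.exp_le_exp.mpr hle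
  -- now 0 < p < 1
  have hD : ∀ x : ℝ, 0 < 1 - p + p * Real.exp x := fun x => by nlinarith [Real.exp_pos x]
  have hdD : ∀ x : ℝ, HasDerivAt (fun y : ℝ => 1 - p + p * Real.exp y) (p * Real.exp x) x := by
    intro x
    simpa using ((Real.hasDerivAt_exp x).const_mul p).const_add (1 - p)
  have hd1 : ∀ x : ℝ, HasDerivAt (fun y => y * p + y ^ 2 / 8 - Real.log (1 - p + p * Real.exp y))
      (p + x / 4 - p * Real.exp x / (1 - p + p * Real.exp x)) x := by
    intro x
    have ha : HasDerivAt (fun y : ℝ => y * p + y ^ 2 / 8) (p + x / 4) x := by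
      have h := ((hasDerivAt_id x).mul_const p).add ((hasDerivAt_pow 2 x).div_const 8)
      exact h.congr_deriv (by norm_num; ring)
    have hb : HasDerivAt (fun y => Real.log (1 - p + p * Real.exp y))
        (p * Real.exp x / (1 - p + p * Real.exp x)) x := (hdD x).log (hD x).ne'
    exact ha.sub hb
  have hd2 : ∀ x : ℝ, HasDerivAt (fun y => p + y / 4 - p * Real.exp y / (1 - p + p * Real.exp y))
      (1 / 4 - p * Real.exp x * (1 - p) / (1 - p + p * Real.exp x) ^ 2) x := by
    intro x
    have hnum : HasDerivAt (fun y : ℝ => p * Real.exp y) (p * Real.exp x) x :=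
      (Real.hasDerivAt_exp x).const_mul p
    have hquot := hnum.div (hdD x) (hD x).ne'
    have hlin : HasDerivAt (fun y : ℝ => p + y / 4) (1 / 4) x := by
      simpa using ((hasDerivAt_id x).div_const 4).const_add p
    have h := hlin.sub hquot
    exact h.congr_deriv (by have hne := (hD x).ne'; field_simp; ring)
  have hmono : Monotone (fun x => p + x / 4 - p * Real.exp x / (1 - p + p * Real.exp x)) := by
    apply monotone_of_deriv_nonneg (fun x => (hd2 x).differentiableAt)
    intro x
    rw [(hd2 x).deriv]
    rw [sub_nonneg, div_le_iff₀ (pow_pos (hD x) 2)]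
    nlinarith [Real.exp_pos x, sq_nonneg (p * Real.exp x - (1 - p))]
  have hf0 : p + (0:ℝ) / 4 - p * Real.exp 0 / (1 - p + p * Real.exp 0) = 0 := by
    rw [Real.exp_zero]
    have : 1 - p + p * 1 = (1:ℝ) := by ring
    rw [this]
    ring
  have hfmono : MonotoneOn (fun y => y * p + y ^ 2 / 8 - Real.log (1 - p + p * Real.exp y))
      (Set.Ici (0:ℝ)) := by
    have hdiff : Differentiable ℝ (fun y => y * p + y ^ 2 / 8 - Real.log (1 - p + p * Real.exp y)) :=
      fun x => (hd1 x).differentiableAt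
    apply monotoneOn_of_deriv_nonneg (convex_Ici 0) hdiff.continuous.continuousOn
      hdiff.differentiableOn
    intro x hx
    rw [(hd1 x).deriv]
    have hx0 : (0:ℝ) ≤ x := by
      rw [interior_Ici] at hx
      exact le_of_lt hx
    have := hmono hx0
    simpa [hf0] using this
  have key := hfmono (Set.mem_Ici.mpr le_rfl) (Set.mem_Ici.mpr hl) hl
  have h00 : (0:ℝ) * p + (0:ℝ) ^ 2 / 8 - Real.log (1 - p + p * Real.exp 0) = 0 := by
    rw [Real.exp_zero]
    have : 1 - p + p * 1 = (1:ℝ) := by ring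
    rw [this, Real.log_one]
    ring
  simp only [] at key
  rw [h00] at key
  have hlog : Real.log (1 - p + p * Real.exp l) ≤ l * p + l ^ 2 / 8 := by linarith
  calc 1 - p + p * Real.exp l = Real.exp (Real.log (1 - p + p * Real.exp l)) :=
        (Real.exp_log (hD l)).symm
    _ ≤ Real.exp (l * p + l ^ 2 / 8) := Real.exp_le_exp.mpr hlog

lemma binEnt_eq_binEntropy (x : ℝ) : binEnt x = Real.binEntropy x / Real.log 2 := by
  unfold binEnt Real.binEntropy Real.logb
  rw [Real.log_inv, Real.log_inv]
  have h2 : Real.log 2 ≠ 0 := (Real.log_pos one_lt_two).ne'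
  field_simp
  ring

lemma binEnt_log2 (q : ℝ) :
    binEnt q * Real.log 2 = -(q * Real.log q) - (1 - q) * Real.log (1 - q) := by
  rw [binEnt_eq_binEntropy]
  have h2 : Real.log 2 ≠ 0 := (Real.log_pos one_lt_two).ne'
  rw [div_mul_cancel₀ _ h2]
  unfold Real.binEntropy
  rw [Real.log_inv, Real.log_inv]
  ring

/-- Tangent-line (concavity) bound for the binary entropy. -/
lemma binEnt_tangent {p q : ℝ} (hp : 0 < p) (hpq : p < q) (hq1 : q < 1) :
    binEnt q ≤ binEnt p + (q - p) * Real.logb 2 ((1 - p) / p) := by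
  have hlog2 : (0:ℝ) < Real.log 2 := Real.log_pos one_lt_two
  obtain ⟨c, hc, hceq⟩ := exists_hasDerivAt_eq_slope Real.binEntropy
    (fun x => Real.log (1 - x) - Real.log x) hpq
    Real.binEntropy_continuous.continuousOn
    (fun x hx => Real.hasDerivAt_binEntropy (hp.trans hx.1).ne' (hx.2.trans hq1).ne)
  have hqp : (0:ℝ) < q - p := by linarith
  have hslope : Real.binEntropy q - Real.binEntropy p
      = (q - p) * (Real.log (1 - c) - Real.log c) := by
    rw [eq_div_iff hqp.ne'] at hceq
    linear_combination -hceq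
  have hEnt : Real.binEntropy q - Real.binEntropy p
      ≤ (q - p) * (Real.log (1 - p) - Real.log p) := by
    rw [hslope]
    have h1 : Real.log (1 - c) ≤ Real.log (1 - p) := by
      have hc1 : 0 < 1 - c := by linarith [hc.2]
      exact Real.log_le_log hc1 (by linarith [hc.1])
    have h2 : Real.log p ≤ Real.log c := Real.log_le_log hp (le_of_lt hc.1)
    have := mul_le_mul_of_nonneg_left (show Real.log (1 - c) - Real.log c
        ≤ Real.log (1 - p) - Real.log p by linarith) hqp.le
    linarith
  rw [binEnt_eq_binEntropy, binEnt_eq_binEntropy, Real.logb,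
    Real.log_div (by linarith : (1:ℝ) - p ≠ 0) hp.ne']
  rw [div_le_iff₀ hlog2, add_mul, div_mul_cancel₀ _ hlog2.ne', mul_assoc,
    div_mul_cancel₀ _ hlog2.ne']
  linarith

/-- Evaluation at one coordinate of a sum over a function space. -/
lemma sum_eval {K X : Type*} [Fintype K] [DecidableEq K] [Fintype X] (t : K) (h : X → ℝ) :
    ∑ code : K → X, h (code t)
      = (∑ x, h x) * (Fintype.card X : ℝ) ^ (Fintype.card K - 1) := by
  calc ∑ code : K → X, h (code t)
      = ∑ code : K → X, ∏ u, (if u = t then h (code u) else 1) := by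
        refine Finset.sum_congr rfl fun code _ => ?_
        rw [Finset.prod_ite_eq' Finset.univ t (fun u => h (code u))]
        simp
    _ = ∏ u, ∑ x : X, (if u = t then h x else 1) :=
        sum_pi_prod (fun (u : K) (x : X) => if u = t then h x else 1)
    _ = ∏ u, (if u = t then (∑ x, h x) else (Fintype.card X : ℝ)) := by
        refine Finset.prod_congr rfl fun u _ => ?_
        split
        · rfl
        · simp [Finset.card_univ]
    _ = (∑ x, h x) * (Fintype.card X : ℝ) ^ (Fintype.card K - 1) := by
        rw [← Finset.mul_prod_erase Finset.univ _ (Finset.mem_univ t), if_pos rfl]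
        congr 1
        rw [Finset.prod_congr rfl (fun u hu => if_neg (Finset.ne_of_mem_erase hu)),
          Finset.prod_const, Finset.card_erase_of_mem (Finset.mem_univ t), Finset.card_univ]

/-- Reindexing a sum over codes by an involution on one coordinate with an involution. -/
lemma sum_conj {K X : Type*} [Fintype K] [DecidableEq K] [Fintype X] {s t : K} (hst : s ≠ t)
    (φ : X → X → X) (hφ : ∀ v, Function.Involutive (φ v)) (F : (K → X) → ℝ) :
    ∑ code : K → X, F (Function.update code t (φ (code s) (code t)))
      = ∑ code : K → X, F code := by
  have hΨ : Function.Involutive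
      (fun code : K → X => Function.update code t (φ (code s) (code t))) := by
    intro code
    have hs : Function.update code t (φ (code s) (code t)) s = code s :=
      Function.update_of_ne hst _ _
    simp only [hs, Function.update_self]
    rw [Function.update_idem, hφ (code s) (code t), Function.update_eq_self]
  exact Fintype.sum_bijective _ hΨ.bijective _ _ (fun code => rfl)

/-- Chernoff/Hoeffding tail bound for the binomial weight of the BSC noise. -/
lemma chernoff_tail {p τ : ℝ} (hp0 : 0 ≤ p) (hp1 : p ≤ 1) (hτ : 0 < τ) (n : ℕ) :
    ∑ e : Fin n → Fin 2, (∏ a, if e a = 1 then p else 1 - p) *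
        (if ((Finset.univ.filter fun a => e a = 1).card : ℝ) ≤ (n:ℝ) * (p + τ) then (0:ℝ) else 1)
      ≤ Real.exp (-2 * τ ^ 2 * n) := by
  have hPnn : ∀ e : Fin n → Fin 2, 0 ≤ ∏ a, if e a = 1 then p else 1 - p :=
    fun e => Finset.prod_nonneg fun a _ => by split <;> linarith
  have step1 : ∀ e : Fin n → Fin 2,
      (∏ a, if e a = 1 then p else 1 - p) *
          (if ((Finset.univ.filter fun a => e a = 1).card : ℝ) ≤ (n:ℝ) * (p + τ) then (0:ℝ) else 1)
        ≤ Real.exp (-(4 * τ) * ((n:ℝ) * (p + τ))) *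
            ∏ a, (if e a = 1 then p * Real.exp (4 * τ) else 1 - p) := by
    intro e
    have hprod : Real.exp (-(4 * τ) * ((n:ℝ) * (p + τ))) *
          ∏ a, (if e a = 1 then p * Real.exp (4 * τ) else 1 - p)
        = (∏ a, if e a = 1 then p else 1 - p) *
            Real.exp (4 * τ * (((Finset.univ.filter fun a => e a = 1).card : ℝ)
              - (n:ℝ) * (p + τ))) := by
      have h1 : ∏ a, (if e a = 1 then p * Real.exp (4 * τ) else 1 - p)
          = (∏ a, if e a = 1 then p else 1 - p) *
              ∏ a, (if e a = 1 then Real.exp (4 * τ) else 1) := by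
        rw [← Finset.prod_mul_distrib]
        exact Finset.prod_congr rfl fun a _ => by split <;> ring
      rw [h1, prod_ite_card]
      rw [show 4 * τ * (((Finset.univ.filter fun a => e a = 1).card : ℝ) - (n:ℝ) * (p + τ))
          = ((Finset.univ.filter fun a => e a = 1).card : ℝ) * (4 * τ)
            + (-(4 * τ) * ((n:ℝ) * (p + τ))) from by ring]
      rw [Real.exp_add, Real.exp_nat_mul]
      ring
    rw [hprod]
    split
    · simpa using mul_nonneg (hPnn e) (Real.exp_pos _).le
    · rename_i hgt
      have hone : (1:ℝ) ≤ Real.exp (4 * τ * (((Finset.univ.filter fun a => e a = 1).card : ℝ)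
          - (n:ℝ) * (p + τ))) := by
        apply Real.one_le_exp
        nlinarith [not_le.mp hgt]
      simpa using mul_le_mul_of_nonneg_left hone (hPnn e)
  calc ∑ e : Fin n → Fin 2, (∏ a, if e a = 1 then p else 1 - p) *
        (if ((Finset.univ.filter fun a => e a = 1).card : ℝ) ≤ (n:ℝ) * (p + τ) then (0:ℝ) else 1)
      ≤ ∑ e : Fin n → Fin 2, Real.exp (-(4 * τ) * ((n:ℝ) * (p + τ))) *
          ∏ a, (if e a = 1 then p * Real.exp (4 * τ) else 1 - p) :=
        Finset.sum_le_sum fun e _ => step1 e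
    _ = Real.exp (-(4 * τ) * ((n:ℝ) * (p + τ))) *
          ∑ e : Fin n → Fin 2, ∏ a, (if e a = 1 then p * Real.exp (4 * τ) else 1 - p) := by
        rw [Finset.mul_sum]
    _ = Real.exp (-(4 * τ) * ((n:ℝ) * (p + τ))) * ((1 - p) + p * Real.exp (4 * τ)) ^ n := by
        congr 1
        calc ∑ e : Fin n → Fin 2, ∏ a, (if e a = 1 then p * Real.exp (4 * τ) else 1 - p)
            = ∏ a : Fin n, ∑ b : Fin 2, (if b = 1 then p * Real.exp (4 * τ) else 1 - p) :=
              sum_pi_prod (fun (_ : Fin n) (b : Fin 2) => if b = 1 then p * Real.exp (4 * τ) else 1 - p)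
          _ = ((1 - p) + p * Real.exp (4 * τ)) ^ n := by
              rw [Fin.sum_univ_two, if_neg (by decide : ¬(0:Fin 2) = 1), if_pos rfl,
                Finset.prod_const, Finset.card_univ, Fintype.card_fin]
    _ ≤ Real.exp (-(4 * τ) * ((n:ℝ) * (p + τ))) * (Real.exp ((4 * τ) * p + (4 * τ) ^ 2 / 8)) ^ n := by
        apply mul_le_mul_of_nonneg_left _ (Real.exp_pos _).le
        apply pow_le_pow_left₀ (by nlinarith [Real.exp_pos (4 * τ)])
        have h := hoeffding_bernoulli hp0 hp1 (4 * τ) (by linarith)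
        linarith
    _ = Real.exp (-2 * τ ^ 2 * n) := by
        rw [← Real.exp_nat_mul, ← Real.exp_add]
        congr 1
        ring

/-- Volume bound for Hamming balls via the entropy function. -/
lemma vol_bound {q : ℝ} (hq0 : 0 < q) (hq2 : q ≤ 1 / 2) (n : ℕ) :
    ∑ x : Fin n → Fin 2,
        (if ((Finset.univ.filter fun a => x a = 1).card : ℝ) ≤ (n:ℝ) * q then (1:ℝ) else 0)
      ≤ (2:ℝ) ^ ((n:ℝ) * binEnt q) := by
  have h1q : 0 < 1 - q := by linarith
  have hρ0 : 0 < (1 - q) / q := div_pos h1q hq0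
  have hρ1 : 1 ≤ (1 - q) / q := (one_le_div hq0).mpr (by linarith)
  have hstep : ∀ x : Fin n → Fin 2,
      (if ((Finset.univ.filter fun a => x a = 1).card : ℝ) ≤ (n:ℝ) * q then (1:ℝ) else 0)
        ≤ ((1 - q) / q) ^ ((n:ℝ) * q) *
            (((1 - q) / q)⁻¹) ^ ((Finset.univ.filter fun a => x a = 1).card) := by
    intro x
    have heq : ((1 - q) / q) ^ ((n:ℝ) * q) *
          (((1 - q) / q)⁻¹) ^ ((Finset.univ.filter fun a => x a = 1).card)
        = ((1 - q) / q) ^ ((n:ℝ) * q - ((Finset.univ.filter fun a => x a = 1).card : ℝ)) := by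
      rw [Real.rpow_sub hρ0, Real.rpow_natCast]
      ring
    rw [heq]
    split
    · exact Real.one_le_rpow hρ1 (by linarith)
    · exact (Real.rpow_pos_of_pos hρ0 _).le
  calc ∑ x : Fin n → Fin 2,
        (if ((Finset.univ.filter fun a => x a = 1).card : ℝ) ≤ (n:ℝ) * q then (1:ℝ) else 0)
      ≤ ∑ x : Fin n → Fin 2, ((1 - q) / q) ^ ((n:ℝ) * q) *
          (((1 - q) / q)⁻¹) ^ ((Finset.univ.filter fun a => x a = 1).card) :=
        Finset.sum_le_sum fun x _ => hstep x
    _ = ((1 - q) / q) ^ ((n:ℝ) * q) *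
          ∑ x : Fin n → Fin 2, (((1 - q) / q)⁻¹) ^ ((Finset.univ.filter fun a => x a = 1).card) := by
        rw [Finset.mul_sum]
    _ = ((1 - q) / q) ^ ((n:ℝ) * q) * (1 + ((1 - q) / q)⁻¹) ^ n := by
        congr 1
        calc ∑ x : Fin n → Fin 2, (((1 - q) / q)⁻¹) ^ ((Finset.univ.filter fun a => x a = 1).card)
            = ∑ x : Fin n → Fin 2, ∏ a, (if x a = 1 then ((1 - q) / q)⁻¹ else 1) :=
              Finset.sum_congr rfl fun x _ => (prod_ite_card _ _).symm
          _ = ∏ a : Fin n, ∑ b : Fin 2, (if b = 1 then ((1 - q) / q)⁻¹ else (1:ℝ)) :=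
              sum_pi_prod (fun (_ : Fin n) (b : Fin 2) => if b = 1 then ((1 - q) / q)⁻¹ else (1:ℝ))
          _ = (1 + ((1 - q) / q)⁻¹) ^ n := by
              rw [Fin.sum_univ_two, if_neg (by decide : ¬(0:Fin 2) = 1), if_pos rfl,
                Finset.prod_const, Finset.card_univ, Fintype.card_fin]
    _ ≤ (2:ℝ) ^ ((n:ℝ) * binEnt q) := by
        apply le_of_eq
        have e2 : (1:ℝ) + ((1 - q) / q)⁻¹ = (1 - q)⁻¹ := by
          rw [inv_div]
          field_simp
          ring
        rw [e2, Real.rpow_def_of_pos hρ0, Real.rpow_def_of_pos two_pos,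
          ← Real.exp_log (inv_pos.mpr h1q), ← Real.exp_nat_mul, ← Real.exp_add]
        congr 1
        rw [Real.log_div h1q.ne' hq0.ne', Real.log_inv]
        linear_combination (-(n:ℝ)) * binEnt_log2 q

lemma prFin_congr {α : Type*} [Fintype α] {P Q : α → Prop} (h : ∀ a, P a ↔ Q a) :
    prFin P = prFin Q := by
  have hPQ : P = Q := funext fun a => propext (h a)
  rw [hPQ]

/-- Markov's inequality over a uniform finite ensemble. -/
lemma markov_prFin {α : Type*} [Fintype α] [Nonempty α] (F : α → ℝ) (hF : ∀ a, 0 ≤ F a)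
    {c B : ℝ} (hc : 1 ≤ c) (hB : 0 < B)
    (hsum : ∑ a, F a ≤ (Fintype.card α : ℝ) * B) :
    prFin (fun a => F a ≤ c * B) ≥ 1 - 1 / c := by
  classical
  have hc0 : (0:ℝ) < c := lt_of_lt_of_le one_pos hc
  have hN0 : (0:ℝ) < (Fintype.card α : ℝ) := by exact_mod_cast Fintype.card_pos
  have hbadsum : ((Finset.univ.filter fun a => ¬ (F a ≤ c * B)).card : ℝ) * (c * B)
      ≤ (Fintype.card α : ℝ) * B := by
    have h1 : (Finset.univ.filter fun a => ¬ (F a ≤ c * B)).card • (c * B)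
        ≤ ∑ a ∈ Finset.univ.filter fun a => ¬ (F a ≤ c * B), F a :=
      Finset.card_nsmul_le_sum _ F (c * B)
        (fun x hx => le_of_lt (not_le.mp (Finset.mem_filter.mp hx).2))
    have h2 : ∑ a ∈ Finset.univ.filter fun a => ¬ (F a ≤ c * B), F a ≤ ∑ a, F a :=
      Finset.sum_le_sum_of_subset_of_nonneg (Finset.filter_subset _ _) (fun i _ _ => hF i)
    calc ((Finset.univ.filter fun a => ¬ (F a ≤ c * B)).card : ℝ) * (c * B)
        = (Finset.univ.filter fun a => ¬ (F a ≤ c * B)).card • (c * B) :=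
          (nsmul_eq_mul _ _).symm
      _ ≤ ∑ a ∈ Finset.univ.filter fun a => ¬ (F a ≤ c * B), F a := h1
      _ ≤ ∑ a, F a := h2
      _ ≤ (Fintype.card α : ℝ) * B := hsum
  have hbadcard : ((Finset.univ.filter fun a => ¬ (F a ≤ c * B)).card : ℝ)
      ≤ (Fintype.card α : ℝ) / c := by
    rw [le_div_iff₀ hc0]
    exact le_of_mul_le_mul_right (by linarith [hbadsum]) hB
  have hcards : (Finset.univ.filter fun a => F a ≤ c * B).card
      + (Finset.univ.filter fun a => ¬ (F a ≤ c * B)).card = Fintype.card α := by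
    rw [Finset.card_filter_add_card_filter_not, Finset.card_univ]
  have hgoodcard : ((Finset.univ.filter fun a => F a ≤ c * B).card : ℝ)
      = (Fintype.card α : ℝ) - ((Finset.univ.filter fun a => ¬ (F a ≤ c * B)).card : ℝ) := by
    have := congrArg (fun m : ℕ => (m : ℝ)) hcards
    push_cast at this
    linarith
  have hfrac : ((Finset.univ.filter fun a => ¬ (F a ≤ c * B)).card : ℝ) / (Fintype.card α : ℝ)
      ≤ 1 / c := by
    rw [div_le_div_iff₀ hN0 hc0]
    rw [le_div_iff₀ hc0] at hbadcard
    linarith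
  unfold prFin
  rw [Finset.filter_congr_decidable]
  rw [ge_iff_le, hgoodcard, sub_div, div_self hN0.ne']
  linarith

/-- Counting codes for which a fixed wrong codeword is close to the received word. -/
lemma count_bad {n k : ℕ} (s t : Fin k → Fin 2) (e : Fin n → Fin 2) (hts : t ≠ s) (r : ℝ) :
    ∑ code : (Fin k → Fin 2) → Fin n → Fin 2,
        (if (hamm (code t) (fun a => code s a + e a) : ℝ) ≤ r then (1:ℝ) else 0)
      = (∑ x : Fin n → Fin 2,
            if ((Finset.univ.filter fun a => x a = 1).card : ℝ) ≤ r then (1:ℝ) else 0)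
          * (Fintype.card (Fin n → Fin 2) : ℝ) ^ (Fintype.card (Fin k → Fin 2) - 1) := by
  classical
  have hst : s ≠ t := hts.symm
  have hφ : ∀ v : Fin n → Fin 2,
      Function.Involutive (fun w : Fin n → Fin 2 => fun a => w a + (v a + e a)) := by
    intro v w
    funext a
    exact fin2_add_add (w a) (v a + e a)
  have h1 := sum_conj hst (fun v w : Fin n → Fin 2 => fun a => w a + (v a + e a)) hφ
    (fun code : (Fin k → Fin 2) → Fin n → Fin 2 =>
      if (hamm (code t) (fun a => code s a + e a) : ℝ) ≤ r then (1:ℝ) else 0)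
  have h2 : ∀ code : (Fin k → Fin 2) → Fin n → Fin 2,
      (if (hamm ((Function.update code t
              (fun a => code t a + (code s a + e a))) t)
            (fun a => (Function.update code t
              (fun a => code t a + (code s a + e a))) s a + e a) : ℝ) ≤ r then (1:ℝ) else 0)
        = (if (((Finset.univ.filter fun a => (code t) a = 1).card : ℕ) : ℝ) ≤ r
            then (1:ℝ) else 0) := by
    intro code
    have hs2 : Function.update code t (fun a => code t a + (code s a + e a)) s = code s :=
      Function.update_of_ne hst _ _
    rw [Function.update_self, hs2, hamm_add_right]
  rw [← h1]
  calc ∑ code : (Fin k → Fin 2) → Fin n → Fin 2,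
        (if (hamm ((Function.update code t (fun a => code t a + (code s a + e a))) t)
            (fun a => (Function.update code t (fun a => code t a + (code s a + e a))) s a + e a) : ℝ)
          ≤ r then (1:ℝ) else 0)
      = ∑ code : (Fin k → Fin 2) → Fin n → Fin 2,
          (if (((Finset.univ.filter fun a => (code t) a = 1).card : ℕ) : ℝ) ≤ r
            then (1:ℝ) else 0) := Finset.sum_congr rfl fun code _ => h2 code
    _ = (∑ x : Fin n → Fin 2,
            if ((Finset.univ.filter fun a => x a = 1).card : ℝ) ≤ r then (1:ℝ) else 0)
          * (Fintype.card (Fin n → Fin 2) : ℝ) ^ (Fintype.card (Fin k → Fin 2) - 1) :=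
        sum_eval t (fun x : Fin n → Fin 2 =>
          if ((Finset.univ.filter fun a => x a = 1).card : ℝ) ≤ r then (1:ℝ) else 0)

/-- Union bound over wrong messages, for a decodable noise pattern. -/
lemma union_count {n k : ℕ} (r : ℝ)
    (dec : ((Fin k → Fin 2) → Fin n → Fin 2) → (Fin n → Fin 2) → (Fin k → Fin 2))
    (hdec : ∀ (code : (Fin k → Fin 2) → Fin n → Fin 2) (z : Fin n → Fin 2),
      (∃ t : Fin k → Fin 2, (hamm (code t) z : ℝ) ≤ r) →
      (hamm (code (dec code z)) z : ℝ) ≤ r)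
    (s : Fin k → Fin 2) (e : Fin n → Fin 2)
    (hwe : ((Finset.univ.filter fun a => e a = 1).card : ℝ) ≤ r) :
    ∑ code : (Fin k → Fin 2) → Fin n → Fin 2,
        (1 - if dec code (fun a => code s a + e a) = s then (1:ℝ) else 0)
      ≤ ((Finset.univ.erase s).card : ℝ)
          * (∑ x : Fin n → Fin 2,
              if ((Finset.univ.filter fun a => x a = 1).card : ℝ) ≤ r then (1:ℝ) else 0)
          * (Fintype.card (Fin n → Fin 2) : ℝ) ^ (Fintype.card (Fin k → Fin 2) - 1) := by
  classical
  calc ∑ code : (Fin k → Fin 2) → Fin n → Fin 2,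
        (1 - if dec code (fun a => code s a + e a) = s then (1:ℝ) else 0)
      ≤ ∑ code : (Fin k → Fin 2) → Fin n → Fin 2, ∑ t ∈ Finset.univ.erase s,
          (if (hamm (code t) (fun a => code s a + e a) : ℝ) ≤ r then (1:ℝ) else 0) := by
        apply Finset.sum_le_sum
        intro code _
        by_cases hds : dec code (fun a => code s a + e a) = s
        · rw [if_pos hds]
          have : (0:ℝ) ≤ ∑ t ∈ Finset.univ.erase s,
              (if (hamm (code t) (fun a => code s a + e a) : ℝ) ≤ r then (1:ℝ) else 0) :=
            Finset.sum_nonneg fun t _ => ite_nonneg01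
          linarith
        · rw [if_neg hds]
          have hex : (hamm (code (dec code (fun a => code s a + e a)))
              (fun a => code s a + e a) : ℝ) ≤ r := by
            apply hdec
            refine ⟨s, ?_⟩
            rw [hamm_self_add]
            exact hwe
          have hmem : dec code (fun a => code s a + e a) ∈ Finset.univ.erase s :=
            Finset.mem_erase.mpr ⟨hds, Finset.mem_univ _⟩
          have hsingle : (if (hamm (code (dec code (fun a => code s a + e a)))
                (fun a => code s a + e a) : ℝ) ≤ r then (1:ℝ) else 0)
              ≤ ∑ t ∈ Finset.univ.erase s,
                (if (hamm (code t) (fun a => code s a + e a) : ℝ) ≤ r then (1:ℝ) else 0) :=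
            Finset.single_le_sum (f := fun t : Fin k → Fin 2 => if (hamm (code t)
              (fun a => code s a + e a) : ℝ) ≤ r then (1:ℝ) else 0)
              (fun t _ => ite_nonneg01) hmem
          rw [if_pos hex] at hsingle
          linarith
    _ = ∑ t ∈ Finset.univ.erase s, ∑ code : (Fin k → Fin 2) → Fin n → Fin 2,
          (if (hamm (code t) (fun a => code s a + e a) : ℝ) ≤ r then (1:ℝ) else 0) :=
        Finset.sum_comm
    _ = ∑ t ∈ Finset.univ.erase s,
          ((∑ x : Fin n → Fin 2,
              if ((Finset.univ.filter fun a => x a = 1).card : ℝ) ≤ r then (1:ℝ) else 0)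
            * (Fintype.card (Fin n → Fin 2) : ℝ) ^ (Fintype.card (Fin k → Fin 2) - 1)) :=
        Finset.sum_congr rfl fun t ht => count_bad s t e (Finset.ne_of_mem_erase ht) r
    _ = ((Finset.univ.erase s).card : ℝ)
          * (∑ x : Fin n → Fin 2,
              if ((Finset.univ.filter fun a => x a = 1).card : ℝ) ≤ r then (1:ℝ) else 0)
          * (Fintype.card (Fin n → Fin 2) : ℝ) ^ (Fintype.card (Fin k → Fin 2) - 1) := by
        rw [Finset.sum_const, nsmul_eq_mul, mul_assoc]

end NoisyCodingAux

/-- Shannon's noisy coding theorem for the BSC(p_e), p_e = sin²(π/8),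
with a random code of rate 1 − h(p_e) − θ and bounded-distance decoding at radius
n(p_e + τ): with probability ≥ 1 − 1/λ over the code C,
Pr[Ŝ = S] ≥ 1 − λ(e^{−2τ²n} + 2^{−n(θ − τh'(p_e))}). -/
theorem noisy_coding (lam τ θ : ℝ) (hlam : 1 ≤ lam) (hτ0 : 0 < τ)
    (hτ : τ ≤ 1/2 - Real.sin (Real.pi/8)^2)
    (hθ : τ * Real.logb 2 ((1 - Real.sin (Real.pi/8)^2) / Real.sin (Real.pi/8)^2) < θ) :
    ∃ N₀ : ℕ, ∀ n : ℕ, N₀ ≤ n →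
    ∀ k : ℕ, k = Nat.floor ((n:ℝ) * (1 - binEnt (Real.sin (Real.pi/8)^2) - θ)) →
    ∀ dec : ((Fin k → Fin 2) → Fin n → Fin 2) → (Fin n → Fin 2) → (Fin k → Fin 2),
      (∀ (code : (Fin k → Fin 2) → Fin n → Fin 2) (z : Fin n → Fin 2),
        (∃ t : Fin k → Fin 2, (hamm (code t) z : ℝ) ≤ n * (Real.sin (Real.pi/8)^2 + τ)) →
        (hamm (code (dec code z)) z : ℝ) ≤ n * (Real.sin (Real.pi/8)^2 + τ)) →
    prFin (fun code : (Fin k → Fin 2) → Fin n → Fin 2 =>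
      (∑ s : Fin k → Fin 2, ∑ e : Fin n → Fin 2,
        ((2:ℝ)^k)⁻¹
          * (∏ a, if e a = 1 then Real.sin (Real.pi/8)^2 else 1 - Real.sin (Real.pi/8)^2)
          * (if dec code (fun a => code s a + e a) = s then (1:ℝ) else 0))
        ≥ 1 - lam * (Real.exp (-2*τ^2*n)
            + (2:ℝ)^(-(n:ℝ) * (θ - τ * Real.logb 2
                ((1 - Real.sin (Real.pi/8)^2) / Real.sin (Real.pi/8)^2)))))
    ≥ 1 - 1/lam := by
  classical
  refine ⟨0, fun n _ k hk dec hdec => ?_⟩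
  set p : ℝ := Real.sin (Real.pi / 8) ^ 2 with hpdef
  have hsin : 0 < Real.sin (Real.pi / 8) :=
    Real.sin_pos_of_pos_of_lt_pi (by positivity) (by linarith [Real.pi_pos])
  have hppos : 0 < p := by rw [hpdef]; positivity
  have hp2 : p < 1 / 2 := by linarith
  have hp1 : p ≤ 1 := by linarith
  have hq0 : 0 < p + τ := by linarith
  have hq2 : p + τ ≤ 1 / 2 := by linarith
  have hq1 : p + τ < 1 := by linarith
  set U : ℝ := (2:ℝ) ^ (-(n:ℝ) * (θ - τ * Real.logb 2 ((1 - p) / p))) with hUdef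
  set Ex : ℝ := Real.exp (-2 * τ ^ 2 * (n:ℝ)) with hExdef
  have hUpos : 0 < U := by rw [hUdef]; positivity
  have hExpos : 0 < Ex := by rw [hExdef]; positivity
  have hKcast : Fintype.card (Fin k → Fin 2) = 2 ^ k := by simp [Fintype.card_fun]
  set N : ℝ := (Fintype.card ((Fin k → Fin 2) → Fin n → Fin 2) : ℝ) with hNdef
  have hNnonneg : (0:ℝ) ≤ N := by rw [hNdef]; positivity
  have hNX : N = ((Fintype.card (Fin n → Fin 2) : ℝ)) ^ (Fintype.card (Fin k → Fin 2)) := by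
    rw [hNdef, Fintype.card_fun]
    push_cast
    rfl
  have hPnn : ∀ e : Fin n → Fin 2, 0 ≤ ∏ a, if e a = 1 then p else 1 - p :=
    fun e => Finset.prod_nonneg fun a _ => by split <;> linarith
  have hPsum : ∑ e : Fin n → Fin 2, ∏ a, (if e a = 1 then p else 1 - p) = 1 := by
    calc ∑ e : Fin n → Fin 2, ∏ a, (if e a = 1 then p else 1 - p)
        = ∏ a : Fin n, ∑ b : Fin 2, (if b = 1 then p else 1 - p) :=
          sum_pi_prod (fun (_ : Fin n) (b : Fin 2) => if b = 1 then p else 1 - p)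
      _ = 1 := by
          rw [Fin.sum_univ_two, if_neg (by decide : ¬(0:Fin 2) = 1), if_pos rfl,
            show (1:ℝ) - p + p = 1 from by ring, Finset.prod_const, one_pow]
  -- key per-(s,e) estimate
  have keyse : ∀ (s : Fin k → Fin 2) (e : Fin n → Fin 2),
      ∑ code : (Fin k → Fin 2) → Fin n → Fin 2,
          (1 - if dec code (fun a => code s a + e a) = s then (1:ℝ) else 0)
        ≤ N * ((if ((Finset.univ.filter fun a => e a = 1).card : ℝ) ≤ (n:ℝ) * (p + τ)
            then (0:ℝ) else 1) + U) := by
    intro s e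
    by_cases hwe : ((Finset.univ.filter fun a => e a = 1).card : ℝ) ≤ (n:ℝ) * (p + τ)
    · rw [if_pos hwe, zero_add]
      refine le_trans (union_count ((n:ℝ) * (p + τ)) dec hdec s e hwe) ?_
      have hVnonneg : (0:ℝ) ≤ ∑ x : Fin n → Fin 2,
          (if ((Finset.univ.filter fun a => x a = 1).card : ℝ) ≤ (n:ℝ) * (p + τ)
            then (1:ℝ) else 0) :=
        Finset.sum_nonneg fun x _ => by split <;> norm_num
      have hV : (∑ x : Fin n → Fin 2,
          (if ((Finset.univ.filter fun a => x a = 1).card : ℝ) ≤ (n:ℝ) * (p + τ)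
            then (1:ℝ) else 0)) ≤ (2:ℝ) ^ ((n:ℝ) * binEnt (p + τ)) := vol_bound hq0 hq2 n
      rcases Nat.eq_zero_or_pos k with hk0 | hkpos1
      · have hzero : (((Finset.univ : Finset (Fin k → Fin 2)).erase s).card : ℝ) = 0 := by
          rw [Finset.card_erase_of_mem (Finset.mem_univ s), Finset.card_univ, hKcast, hk0]
          norm_num
        rw [hzero, zero_mul, zero_mul]
        exact mul_nonneg hNnonneg hUpos.le
      · have hfl : 0 < Nat.floor ((n:ℝ) * (1 - binEnt p - θ)) := by rw [← hk]; exact hkpos1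
        have hκpos : (1:ℝ) ≤ (n:ℝ) * (1 - binEnt p - θ) := Nat.floor_pos.mp hfl
        have hkle : (k:ℝ) ≤ (n:ℝ) * (1 - binEnt p - θ) := by
          rw [hk]; exact Nat.floor_le (by linarith)
        have hErase : (((Finset.univ : Finset (Fin k → Fin 2)).erase s).card : ℝ)
            ≤ (2:ℝ) ^ ((n:ℝ) * (1 - binEnt p - θ)) := by
          rw [Finset.card_erase_of_mem (Finset.mem_univ s), Finset.card_univ, hKcast]
          calc ((2 ^ k - 1 : ℕ) : ℝ) ≤ ((2 ^ k : ℕ) : ℝ) := by exact_mod_cast Nat.sub_le _ _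
            _ = (2:ℝ) ^ ((k:ℝ)) := by push_cast; rw [Real.rpow_natCast]
            _ ≤ _ := Real.rpow_le_rpow_of_exponent_le one_le_two hkle
        have htan : binEnt (p + τ) ≤ binEnt p + τ * Real.logb 2 ((1 - p) / p) := by
          have h := binEnt_tangent hppos (by linarith : p < p + τ) hq1
          have h2 : p + τ - p = τ := by ring
          rw [h2] at h
          exact h
        have hXcast : (Fintype.card (Fin n → Fin 2) : ℝ) = (2:ℝ) ^ ((n:ℝ)) := by
          have hcX : Fintype.card (Fin n → Fin 2) = 2 ^ n := by simp [Fintype.card_fun]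
          rw [hcX]
          push_cast
          rw [Real.rpow_natCast]
        have hmain : (((Finset.univ : Finset (Fin k → Fin 2)).erase s).card : ℝ)
            * (∑ x : Fin n → Fin 2,
                (if ((Finset.univ.filter fun a => x a = 1).card : ℝ) ≤ (n:ℝ) * (p + τ)
                  then (1:ℝ) else 0))
            ≤ (2:ℝ) ^ ((n:ℝ)) * U := by
          calc (((Finset.univ : Finset (Fin k → Fin 2)).erase s).card : ℝ)
              * (∑ x : Fin n → Fin 2,
                  (if ((Finset.univ.filter fun a => x a = 1).card : ℝ) ≤ (n:ℝ) * (p + τ)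
                    then (1:ℝ) else 0))
              ≤ (2:ℝ) ^ ((n:ℝ) * (1 - binEnt p - θ)) * (2:ℝ) ^ ((n:ℝ) * binEnt (p + τ)) :=
                mul_le_mul hErase hV hVnonneg (by positivity)
            _ = (2:ℝ) ^ ((n:ℝ) * (1 - binEnt p - θ) + (n:ℝ) * binEnt (p + τ)) :=
                (Real.rpow_add two_pos _ _).symm
            _ ≤ (2:ℝ) ^ ((n:ℝ) + (-(n:ℝ) * (θ - τ * Real.logb 2 ((1 - p) / p)))) := by
                apply Real.rpow_le_rpow_of_exponent_le one_le_two
                have hn0 : (0:ℝ) ≤ (n:ℝ) := Nat.cast_nonneg n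
                nlinarith [mul_le_mul_of_nonneg_left htan hn0]
            _ = (2:ℝ) ^ ((n:ℝ)) * U := by rw [Real.rpow_add two_pos, hUdef]
        have hsplitN : N = (Fintype.card (Fin n → Fin 2) : ℝ)
              ^ (Fintype.card (Fin k → Fin 2) - 1) * (Fintype.card (Fin n → Fin 2) : ℝ) := by
          rw [hNX, ← pow_succ]
          congr 1
          have hKpos : 0 < Fintype.card (Fin k → Fin 2) := Fintype.card_pos
          omega
        calc (((Finset.univ : Finset (Fin k → Fin 2)).erase s).card : ℝ)
            * (∑ x : Fin n → Fin 2,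
                (if ((Finset.univ.filter fun a => x a = 1).card : ℝ) ≤ (n:ℝ) * (p + τ)
                  then (1:ℝ) else 0))
            * (Fintype.card (Fin n → Fin 2) : ℝ) ^ (Fintype.card (Fin k → Fin 2) - 1)
            ≤ ((2:ℝ) ^ ((n:ℝ)) * U)
              * (Fintype.card (Fin n → Fin 2) : ℝ) ^ (Fintype.card (Fin k → Fin 2) - 1) :=
              mul_le_mul_of_nonneg_right hmain (by positivity)
          _ = N * U := by rw [hsplitN, hXcast]; ring
    · rw [if_neg hwe]
      calc ∑ code : (Fin k → Fin 2) → Fin n → Fin 2,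
          (1 - if dec code (fun a => code s a + e a) = s then (1:ℝ) else 0)
          ≤ ∑ _code : (Fin k → Fin 2) → Fin n → Fin 2, (1:ℝ) :=
            Finset.sum_le_sum fun c _ => by split <;> norm_num
        _ = N := by rw [Finset.sum_const, Finset.card_univ, nsmul_eq_mul, mul_one, hNdef]
        _ ≤ N * (1 + U) := by nlinarith
  -- definition of the failure probability
  set F : ((Fin k → Fin 2) → Fin n → Fin 2) → ℝ := fun code =>
    ∑ s : Fin k → Fin 2, ∑ e : Fin n → Fin 2,
      ((2:ℝ) ^ k)⁻¹ * (∏ a, if e a = 1 then p else 1 - p)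
        * (1 - if dec code (fun a => code s a + e a) = s then (1:ℝ) else 0) with hFdef
  have h2kne : ((2:ℝ) ^ k) ≠ 0 := by positivity
  have hFnonneg : ∀ code, 0 ≤ F code := by
    intro code
    simp only [hFdef]
    refine Finset.sum_nonneg fun s _ => Finset.sum_nonneg fun e _ => ?_
    refine mul_nonneg (mul_nonneg (by positivity) (hPnn e)) ?_
    split <;> norm_num
  have hGF : ∀ code : (Fin k → Fin 2) → Fin n → Fin 2,
      (∑ s : Fin k → Fin 2, ∑ e : Fin n → Fin 2,
        ((2:ℝ) ^ k)⁻¹ * (∏ a, if e a = 1 then p else 1 - p)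
          * (if dec code (fun a => code s a + e a) = s then (1:ℝ) else 0)) = 1 - F code := by
    intro code
    rw [eq_sub_iff_add_eq]
    simp only [hFdef]
    calc (∑ s : Fin k → Fin 2, ∑ e : Fin n → Fin 2,
          ((2:ℝ) ^ k)⁻¹ * (∏ a, if e a = 1 then p else 1 - p)
            * (if dec code (fun a => code s a + e a) = s then (1:ℝ) else 0))
        + (∑ s : Fin k → Fin 2, ∑ e : Fin n → Fin 2,
          ((2:ℝ) ^ k)⁻¹ * (∏ a, if e a = 1 then p else 1 - p)
            * (1 - if dec code (fun a => code s a + e a) = s then (1:ℝ) else 0))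
        = ∑ s : Fin k → Fin 2, ∑ e : Fin n → Fin 2,
            (((2:ℝ) ^ k)⁻¹ * (∏ a, if e a = 1 then p else 1 - p)
              * (if dec code (fun a => code s a + e a) = s then (1:ℝ) else 0)
            + ((2:ℝ) ^ k)⁻¹ * (∏ a, if e a = 1 then p else 1 - p)
              * (1 - if dec code (fun a => code s a + e a) = s then (1:ℝ) else 0)) := by
          rw [← Finset.sum_add_distrib]
          exact Finset.sum_congr rfl fun s _ => (Finset.sum_add_distrib).symm
      _ = ∑ s : Fin k → Fin 2, ∑ e : Fin n → Fin 2,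
            ((2:ℝ) ^ k)⁻¹ * (∏ a, if e a = 1 then p else 1 - p) :=
          Finset.sum_congr rfl fun s _ => Finset.sum_congr rfl fun e _ => by ring
      _ = ∑ s : Fin k → Fin 2, ((2:ℝ) ^ k)⁻¹ :=
          Finset.sum_congr rfl fun s _ => by rw [← Finset.mul_sum, hPsum, mul_one]
      _ = 1 := by
          rw [Finset.sum_const, Finset.card_univ, hKcast, nsmul_eq_mul]
          push_cast
          exact mul_inv_cancel₀ h2kne
  -- expectation bound
  have hsumF : ∑ code : (Fin k → Fin 2) → Fin n → Fin 2, F code ≤ N * (Ex + U) := by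
    calc ∑ code : (Fin k → Fin 2) → Fin n → Fin 2, F code
        = ∑ s : Fin k → Fin 2, ∑ e : Fin n → Fin 2,
            (((2:ℝ) ^ k)⁻¹ * (∏ a, if e a = 1 then p else 1 - p)
              * ∑ code : (Fin k → Fin 2) → Fin n → Fin 2,
                  (1 - if dec code (fun a => code s a + e a) = s then (1:ℝ) else 0)) := by
          simp only [hFdef]
          rw [Finset.sum_comm]
          refine Finset.sum_congr rfl fun s _ => ?_
          rw [Finset.sum_comm]
          exact Finset.sum_congr rfl fun e _ => (Finset.mul_sum _ _ _).symm
      _ ≤ ∑ s : Fin k → Fin 2, ∑ e : Fin n → Fin 2,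
            (((2:ℝ) ^ k)⁻¹ * (∏ a, if e a = 1 then p else 1 - p)
              * (N * ((if ((Finset.univ.filter fun a => e a = 1).card : ℝ) ≤ (n:ℝ) * (p + τ)
                  then (0:ℝ) else 1) + U))) := by
          refine Finset.sum_le_sum fun s _ => Finset.sum_le_sum fun e _ => ?_
          exact mul_le_mul_of_nonneg_left (keyse s e) (mul_nonneg (by positivity) (hPnn e))
      _ = N * ((∑ e : Fin n → Fin 2, (∏ a, if e a = 1 then p else 1 - p)
            * (if ((Finset.univ.filter fun a => e a = 1).card : ℝ) ≤ (n:ℝ) * (p + τ)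
                then (0:ℝ) else 1)) + U) := by
          rw [Finset.sum_const, Finset.card_univ, hKcast, nsmul_eq_mul]
          rw [Finset.sum_congr rfl (fun (e : Fin n → Fin 2) (_ : e ∈ Finset.univ) =>
            show ((2:ℝ) ^ k)⁻¹ * (∏ a, if e a = 1 then p else 1 - p)
                * (N * ((if ((Finset.univ.filter fun a => e a = 1).card : ℝ) ≤ (n:ℝ) * (p + τ)
                    then (0:ℝ) else 1) + U))
              = ((2:ℝ) ^ k)⁻¹ * (N * ((∏ a, if e a = 1 then p else 1 - p)
                  * (if ((Finset.univ.filter fun a => e a = 1).card : ℝ) ≤ (n:ℝ) * (p + τ)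
                      then (0:ℝ) else 1)))
                + ((2:ℝ) ^ k)⁻¹ * (N * U) * (∏ a, if e a = 1 then p else 1 - p) from by ring)]
          rw [Finset.sum_add_distrib, ← Finset.mul_sum, ← Finset.mul_sum, ← Finset.mul_sum,
            hPsum, mul_one]
          push_cast
          field_simp
      _ ≤ N * (Ex + U) := by
          have hch : (∑ e : Fin n → Fin 2, (∏ a, if e a = 1 then p else 1 - p)
              * (if ((Finset.univ.filter fun a => e a = 1).card : ℝ) ≤ (n:ℝ) * (p + τ)
                  then (0:ℝ) else 1)) ≤ Ex := by
            rw [hExdef]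
            exact chernoff_tail hppos.le hp1 hτ0 n
          nlinarith [hch, hNnonneg]
  -- Markov and conclusion
  have hiff : ∀ code : (Fin k → Fin 2) → Fin n → Fin 2,
      ((∑ s : Fin k → Fin 2, ∑ e : Fin n → Fin 2,
        ((2:ℝ) ^ k)⁻¹ * (∏ a, if e a = 1 then p else 1 - p)
          * (if dec code (fun a => code s a + e a) = s then (1:ℝ) else 0))
        ≥ 1 - lam * (Ex + U)) ↔ (F code ≤ lam * (Ex + U)) := by
    intro code
    rw [hGF code]
    constructor <;> intro h <;> [linarith; linarith]
  rw [prFin_congr hiff]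
  exact markov_prFin F hFnonneg hlam (add_pos hExpos hUpos) hsumF

end IQ
end
end
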